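/- arXiv:2510.02471 — 2 statements merged into one kernel-verified Lean document; each statement's English description precedes it below -/
import Mathlib

section
/- Split-setting switch coefficients under β-mixing: if Z ∈ Z^{n+1} is stationary with β-mixing coefficients β(τ), then in the split conformal setting, for τ* ≥ 0, L ≤ τ ≤ n_1 − τ*, and 1 ≤ k ≤ n_1 − L + 1 − τ*, the switch coefficients of the truncated score vector satisfy Ψ_{k,τ}(S_{split,τ*}) ≤ 2β(τ*) + 2β(τ−L) for 1 ≤ k ≤ n_1 − τ − τ*, and Ψ_{k,τ}(S_{split,τ*}) ≤ 2β(τ*) for n_1 − τ − τ* < k ≤ n_1 − L + 1 − τ*. -/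
open MeasureTheory
open scoped ENNReal

/-- The `j`-th order statistic (1-indexed) of a finite real vector. -/
noncomputable def orderStat {m : ℕ} (v : Fin m → ℝ) (j : ℕ) : ℝ :=
  ((List.ofFn v).mergeSort (fun x y => x ≤ y)).getD (j - 1) 0

/-- `Quantile b v` is the `⌈b·m⌉`-th order statistic of `v ∈ ℝ^m`, with the conventions
`Quantile b v = ⊤` if `b > 1` and `Quantile b v = ⊥` if `b ≤ 0`. -/
noncomputable def Quantile {m : ℕ} (b : ℝ) (v : Fin m → ℝ) : EReal :=
  if b > 1 then ⊤ else if b ≤ 0 then ⊥ else ((orderStat v ⌈b * m⌉.toNat : ℝ) : EReal)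

/-- The deletion operator `Δ⁰_{k,τ}` of the paper (with `k` and `τ` counts of entries). -/
def delta0 {α : Type*} (m k τ : ℕ) (w : Fin m → α) : Fin (m - τ) → α :=
  fun i =>
    if i.val < m - τ - k then w ⟨i.val, by have := i.isLt; omega⟩
    else w ⟨i.val + τ, by have := i.isLt; omega⟩

/-- The deletion operator `Δ¹_{k,τ}` of the paper. -/
def delta1 {α : Type*} (m k τ : ℕ) (w : Fin m → α) : Fin (m - τ) → α :=
  fun i =>
    if h : k + τ < m then
      if h2 : i.val < m - τ - k then w ⟨i.val + k + τ, by have := i.isLt; omega⟩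
      else w ⟨i.val - (m - τ - k), by have := i.isLt; omega⟩
    else w ⟨(i.val + k + τ - m) % m, Nat.mod_lt _ (by have := i.isLt; omega)⟩

/-- Total variation distance between the laws of two random elements `U, V` under `P`. -/
noncomputable def dTV {Ω γ : Type*} [MeasurableSpace Ω] [MeasurableSpace γ]
    (P : Measure Ω) (U V : Ω → γ) : ℝ :=
  ⨆ E : {E : Set γ // MeasurableSet E}, |(P (U ⁻¹' E.1)).toReal - (P (V ⁻¹' E.1)).toReal|

/-- The switch coefficient `Ψ_{k,τ}(W)` of a random vector `W` of length `m`. -/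
noncomputable def switchCoef {Ω α : Type*} [MeasurableSpace Ω] [MeasurableSpace α]
    (P : Measure Ω) {m : ℕ} (W : Ω → Fin m → α) (k τ : ℕ) : ℝ :=
  dTV P (fun ω => delta0 m k τ (W ω)) (fun ω => delta1 m k τ (W ω))

/-- The averaged switch coefficient `Ψ̄_τ(W) = (1/m) ∑_{k=1}^m Ψ_{k,τ}(W)`. -/
noncomputable def avgSwitchCoef {Ω α : Type*} [MeasurableSpace Ω] [MeasurableSpace α]
    (P : Measure Ω) {m : ℕ} (W : Ω → Fin m → α) (τ : ℕ) : ℝ :=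
  (∑ k ∈ Finset.Icc 1 m, switchCoef P W k τ) / m

/-- Stationarity of a time series `Z = (Z_1,…,Z_{n+1})`. -/
def Stationary {Ω α : Type*} [MeasurableSpace Ω] [MeasurableSpace α]
    (P : Measure Ω) {n : ℕ} (Z : Ω → Fin (n + 1) → α) : Prop :=
  ∀ (ℓ i : ℕ) (h : i + ℓ ≤ n + 1),
    Measure.map (fun ω (j : Fin ℓ) => Z ω ⟨i + j.val, by have := j.isLt; omega⟩) P =
      Measure.map (fun ω (j : Fin ℓ) => Z ω ⟨j.val, by have := j.isLt; omega⟩) P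

/-- Exchangeability of a random vector. -/
def Exchangeable {Ω α : Type*} [MeasurableSpace Ω] [MeasurableSpace α]
    (P : Measure Ω) {n : ℕ} (Z : Ω → Fin (n + 1) → α) : Prop :=
  ∀ σ : Equiv.Perm (Fin (n + 1)),
    Measure.map (fun ω => Z ω ∘ σ) P = Measure.map Z P

/-- The β-mixing coefficient with lag `τ` of `Z`, defined via an independent copy `Z'`. -/
noncomputable def betaMix {Ω α : Type*} [MeasurableSpace Ω] [MeasurableSpace α]
    (P : Measure Ω) (n : ℕ) (Z Z' : Ω → Fin (n + 1) → α) (τ : ℕ) : ℝ :=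
  ⨆ k : Fin (n - τ),
    dTV P
      (fun ω (i : Fin (n + 1 - τ)) =>
        if i.val < k.val + 1 then Z ω ⟨i.val, by have := i.isLt; omega⟩
        else Z ω ⟨i.val + τ, by have := i.isLt; omega⟩)
      (fun ω (i : Fin (n + 1 - τ)) =>
        if i.val < k.val + 1 then Z ω ⟨i.val, by have := i.isLt; omega⟩
        else Z' ω ⟨i.val + τ, by have := i.isLt; omega⟩)


namespace SBaux

open ProbabilityTheory

noncomputable def dTVm {γ : Type*} [MeasurableSpace γ] (μ ν : Measure γ) : ℝ :=
  ⨆ E : {E : Set γ // MeasurableSet E}, |(μ E.1).toReal - (ν E.1).toReal|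

variable {γ δ : Type*} [MeasurableSpace γ] [MeasurableSpace δ]

lemma toReal_prob_le_one {μ : Measure γ} [IsProbabilityMeasure μ] (E : Set γ) :
    (μ E).toReal ≤ 1 :=
  ENNReal.toReal_le_of_le_ofReal one_pos.le (by simpa using prob_le_one (μ := μ) (s := E))

lemma dTVm_nonneg (μ ν : Measure γ) : 0 ≤ dTVm μ ν :=
  Real.iSup_nonneg (fun _ => abs_nonneg _)

lemma dTVm_term_le (μ ν : Measure γ) [IsProbabilityMeasure μ] [IsProbabilityMeasure ν]
    (E : Set γ) : |(μ E).toReal - (ν E).toReal| ≤ 1 := by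
  have h1 : (μ E).toReal ≤ 1 := toReal_prob_le_one E
  have h2 : (ν E).toReal ≤ 1 := toReal_prob_le_one E
  have h3 : 0 ≤ (μ E).toReal := ENNReal.toReal_nonneg
  have h4 : 0 ≤ (ν E).toReal := ENNReal.toReal_nonneg
  rw [abs_sub_le_iff]; constructor <;> linarith

lemma dTVm_bdd (μ ν : Measure γ) [IsProbabilityMeasure μ] [IsProbabilityMeasure ν] :
    BddAbove (Set.range fun E : {E : Set γ // MeasurableSet E} =>
      |(μ E.1).toReal - (ν E.1).toReal|) := by
  refine ⟨1, ?_⟩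
  rintro x ⟨E, rfl⟩
  exact dTVm_term_le μ ν E.1

lemma le_dTVm (μ ν : Measure γ) [IsProbabilityMeasure μ] [IsProbabilityMeasure ν]
    {E : Set γ} (hE : MeasurableSet E) :
    |(μ E).toReal - (ν E).toReal| ≤ dTVm μ ν :=
  le_ciSup (dTVm_bdd μ ν) ⟨E, hE⟩

lemma dTVm_le {μ ν : Measure γ} {c : ℝ}
    (h : ∀ E : Set γ, MeasurableSet E → |(μ E).toReal - (ν E).toReal| ≤ c) :
    dTVm μ ν ≤ c :=
  ciSup_le (fun E => h E.1 E.2)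

lemma dTVm_comm (μ ν : Measure γ) : dTVm μ ν = dTVm ν μ := by
  unfold dTVm
  exact iSup_congr (fun E => abs_sub_comm _ _)

lemma dTVm_triangle (μ ν ρ : Measure γ) [IsProbabilityMeasure μ] [IsProbabilityMeasure ν]
    [IsProbabilityMeasure ρ] : dTVm μ ρ ≤ dTVm μ ν + dTVm ν ρ := by
  refine dTVm_le (fun E hE => ?_)
  calc |(μ E).toReal - (ρ E).toReal|
      ≤ |(μ E).toReal - (ν E).toReal| + |(ν E).toReal - (ρ E).toReal| := abs_sub_le _ _ _
    _ ≤ dTVm μ ν + dTVm ν ρ := add_le_add (le_dTVm _ _ hE) (le_dTVm _ _ hE)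

lemma dTVm_map_le (μ ν : Measure γ) [IsProbabilityMeasure μ] [IsProbabilityMeasure ν]
    {f : γ → δ} (hf : Measurable f) :
    dTVm (μ.map f) (ν.map f) ≤ dTVm μ ν := by
  refine dTVm_le (fun E hE => ?_)
  rw [Measure.map_apply hf hE, Measure.map_apply hf hE]
  exact le_dTVm μ ν (hf hE)

lemma dTV_eq_dTVm {Ω : Type*} [MeasurableSpace Ω] (P : Measure Ω) {U V : Ω → γ}
    (hU : Measurable U) (hV : Measurable V) :
    dTV P U V = dTVm (P.map U) (P.map V) := by
  unfold dTV dTVm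
  refine iSup_congr (fun E => ?_)
  rw [Measure.map_apply hU E.2, Measure.map_apply hV E.2]

lemma dTVm_eq_zero {μ ν : Measure γ} (h : μ = ν) : dTVm μ ν = 0 := by
  subst h
  unfold dTVm
  simp

lemma dTVm_prod_le (μ : Measure γ) [IsProbabilityMeasure μ]
    (ν ν' : Measure δ) [IsProbabilityMeasure ν] [IsProbabilityMeasure ν'] :
    dTVm (μ.prod ν) (μ.prod ν') ≤ dTVm ν ν' := by
  refine dTVm_le (fun E hE => ?_)
  rw [Measure.prod_apply hE, Measure.prod_apply hE]
  set f : γ → ℝ := fun x => (ν (Prod.mk x ⁻¹' E)).toReal with hf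
  set g : γ → ℝ := fun x => (ν' (Prod.mk x ⁻¹' E)).toReal with hg
  have hfm : Measurable f := (measurable_measure_prodMk_left hE).ennreal_toReal
  have hgm : Measurable g := (measurable_measure_prodMk_left hE).ennreal_toReal
  have hfi : Integrable f μ := by
    refine (integrable_const (1:ℝ)).mono' hfm.aestronglyMeasurable ?_
    filter_upwards with x
    rw [Real.norm_eq_abs, abs_of_nonneg ENNReal.toReal_nonneg]
    exact toReal_prob_le_one _
  have hgi : Integrable g μ := by
    refine (integrable_const (1:ℝ)).mono' hgm.aestronglyMeasurable ?_
    filter_upwards with x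
    rw [Real.norm_eq_abs, abs_of_nonneg ENNReal.toReal_nonneg]
    exact toReal_prob_le_one _
  have h1 : (∫⁻ x, ν (Prod.mk x ⁻¹' E) ∂μ).toReal = ∫ x, f x ∂μ := by
    rw [integral_toReal (measurable_measure_prodMk_left hE).aemeasurable]
    filter_upwards with x
    exact lt_of_le_of_lt prob_le_one (by norm_num)
  have h2 : (∫⁻ x, ν' (Prod.mk x ⁻¹' E) ∂μ).toReal = ∫ x, g x ∂μ := by
    rw [integral_toReal (measurable_measure_prodMk_left hE).aemeasurable]
    filter_upwards with x
    exact lt_of_le_of_lt prob_le_one (by norm_num)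
  rw [h1, h2, ← integral_sub hfi hgi]
  calc |∫ x, (f x - g x) ∂μ| ≤ ∫ x, |f x - g x| ∂μ := by
        simpa using norm_integral_le_integral_norm (fun x => f x - g x)
    _ ≤ ∫ _, dTVm ν ν' ∂μ := by
        refine integral_mono (hfi.sub hgi).abs (integrable_const _) (fun x => ?_)
        exact le_dTVm ν ν' (measurable_prodMk_left hE)
    _ = dTVm ν ν' := by simp

lemma dTV_nonneg {Ω : Type*} [MeasurableSpace Ω] (P : Measure Ω) (U V : Ω → γ) :
    0 ≤ dTV P U V :=
  Real.iSup_nonneg (fun _ => abs_nonneg _)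

lemma dTV_le_one {Ω : Type*} [MeasurableSpace Ω] (P : Measure Ω) [IsProbabilityMeasure P]
    (U V : Ω → γ) : dTV P U V ≤ 1 := by
  refine ciSup_le (fun E => ?_)
  have h1 : (P (U ⁻¹' E.1)).toReal ≤ 1 := toReal_prob_le_one _
  have h2 : (P (V ⁻¹' E.1)).toReal ≤ 1 := toReal_prob_le_one _
  have h3 : 0 ≤ (P (U ⁻¹' E.1)).toReal := ENNReal.toReal_nonneg
  have h4 : 0 ≤ (P (V ⁻¹' E.1)).toReal := ENNReal.toReal_nonneg
  rw [abs_sub_le_iff]; constructor <;> linarith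

lemma dTV_self {Ω : Type*} [MeasurableSpace Ω] (P : Measure Ω) (U : Ω → γ) :
    dTV P U U = 0 := by
  unfold dTV
  simp

lemma betaMix_nonneg {Ω α : Type*} [MeasurableSpace Ω] [MeasurableSpace α]
    (P : Measure Ω) (n : ℕ) (Z Z' : Ω → Fin (n + 1) → α) (τ : ℕ) :
    0 ≤ betaMix P n Z Z' τ := by
  unfold betaMix
  exact Real.iSup_nonneg (fun _ => dTV_nonneg _ _ _)

lemma step_beta {Ω α γ : Type*} [MeasurableSpace Ω] [MeasurableSpace α] [MeasurableSpace γ]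
    (P : Measure Ω) [IsProbabilityMeasure P] {n : ℕ} (Z Z' : Ω → Fin (n + 1) → α)
    (hZ : Measurable Z) (hZ' : Measurable Z') (τ' : ℕ) (j : Fin (n - τ'))
    (G : (Fin (n + 1 - τ') → α) → γ) (hG : Measurable G) :
    dTVm
      (P.map (fun ω => G (fun i : Fin (n + 1 - τ') =>
        if i.val < j.val + 1 then Z ω ⟨i.val, by have := i.isLt; omega⟩
        else Z ω ⟨i.val + τ', by have := i.isLt; omega⟩)))
      (P.map (fun ω => G (fun i : Fin (n + 1 - τ') =>
        if i.val < j.val + 1 then Z ω ⟨i.val, by have := i.isLt; omega⟩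
        else Z' ω ⟨i.val + τ', by have := i.isLt; omega⟩)))
      ≤ betaMix P n Z Z' τ' := by
  classical
  have hC : Measurable (fun ω (i : Fin (n + 1 - τ')) =>
      if i.val < j.val + 1 then Z ω ⟨i.val, by have := i.isLt; omega⟩
      else Z ω ⟨i.val + τ', by have := i.isLt; omega⟩) := by
    apply measurable_pi_lambda
    intro i
    split_ifs
    · exact (measurable_pi_apply _).comp hZ
    · exact (measurable_pi_apply _).comp hZ
  have hC' : Measurable (fun ω (i : Fin (n + 1 - τ')) =>
      if i.val < j.val + 1 then Z ω ⟨i.val, by have := i.isLt; omega⟩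
      else Z' ω ⟨i.val + τ', by have := i.isLt; omega⟩) := by
    apply measurable_pi_lambda
    intro i
    split_ifs
    · exact (measurable_pi_apply _).comp hZ
    · exact (measurable_pi_apply _).comp hZ'
  have key : dTVm
      (P.map (fun ω (i : Fin (n + 1 - τ')) =>
        if i.val < j.val + 1 then Z ω ⟨i.val, by have := i.isLt; omega⟩
        else Z ω ⟨i.val + τ', by have := i.isLt; omega⟩))
      (P.map (fun ω (i : Fin (n + 1 - τ')) =>
        if i.val < j.val + 1 then Z ω ⟨i.val, by have := i.isLt; omega⟩
        else Z' ω ⟨i.val + τ', by have := i.isLt; omega⟩))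
      ≤ betaMix P n Z Z' τ' := by
    rw [← dTV_eq_dTVm P hC hC']
    unfold betaMix
    have hbdd : BddAbove (Set.range fun k : Fin (n - τ') =>
        dTV P
          (fun ω (i : Fin (n + 1 - τ')) =>
            if i.val < k.val + 1 then Z ω ⟨i.val, by have := i.isLt; omega⟩
            else Z ω ⟨i.val + τ', by have := i.isLt; omega⟩)
          (fun ω (i : Fin (n + 1 - τ')) =>
            if i.val < k.val + 1 then Z ω ⟨i.val, by have := i.isLt; omega⟩
            else Z' ω ⟨i.val + τ', by have := i.isLt; omega⟩)) := by
      refine ⟨1, ?_⟩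
      rintro x ⟨kk, rfl⟩
      exact dTV_le_one P _ _
    exact le_ciSup hbdd j
  haveI i1 : IsProbabilityMeasure (P.map (fun ω (i : Fin (n + 1 - τ')) =>
      if i.val < j.val + 1 then Z ω ⟨i.val, by have := i.isLt; omega⟩
      else Z ω ⟨i.val + τ', by have := i.isLt; omega⟩)) :=
    Measure.isProbabilityMeasure_map hC.aemeasurable
  haveI i2 : IsProbabilityMeasure (P.map (fun ω (i : Fin (n + 1 - τ')) =>
      if i.val < j.val + 1 then Z ω ⟨i.val, by have := i.isLt; omega⟩
      else Z' ω ⟨i.val + τ', by have := i.isLt; omega⟩)) :=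
    Measure.isProbabilityMeasure_map hC'.aemeasurable
  have m1 : P.map (fun ω => G (fun i : Fin (n + 1 - τ') =>
      if i.val < j.val + 1 then Z ω ⟨i.val, by have := i.isLt; omega⟩
      else Z ω ⟨i.val + τ', by have := i.isLt; omega⟩))
      = (P.map (fun ω (i : Fin (n + 1 - τ')) =>
        if i.val < j.val + 1 then Z ω ⟨i.val, by have := i.isLt; omega⟩
        else Z ω ⟨i.val + τ', by have := i.isLt; omega⟩)).map G :=
    (Measure.map_map hG hC).symm
  have m2 : P.map (fun ω => G (fun i : Fin (n + 1 - τ') =>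
      if i.val < j.val + 1 then Z ω ⟨i.val, by have := i.isLt; omega⟩
      else Z' ω ⟨i.val + τ', by have := i.isLt; omega⟩))
      = (P.map (fun ω (i : Fin (n + 1 - τ')) =>
        if i.val < j.val + 1 then Z ω ⟨i.val, by have := i.isLt; omega⟩
        else Z' ω ⟨i.val + τ', by have := i.isLt; omega⟩)).map G :=
    (Measure.map_map hG hC').symm
  rw [m1, m2]
  exact le_trans (dTVm_map_le _ _ hG) key

end SBaux

namespace SBaux

open ProbabilityTheory

noncomputable def phi2 {α : Type*} (n0 L p p1 p2 : ℕ)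
    (A : (Fin n0 → α) → (Fin (L + 1) → α) → ℝ)
    (x : (Fin n0 → α) × ((Fin (p1 + L) → α) × (Fin (p2 + L) → α))) : Fin p → ℝ :=
  fun i =>
    if h : i.val < p1 then
      A x.1 (fun l => x.2.1 ⟨L + i.val - l.val, by have := l.isLt; omega⟩)
    else if h2 : i.val - p1 < p2 then
      A x.1 (fun l => x.2.2 ⟨L + (i.val - p1) - l.val, by have := l.isLt; omega⟩)
    else 0

lemma measurable_phi2 {α : Type*} [MeasurableSpace α] (n0 L p p1 p2 : ℕ)
    {A : (Fin n0 → α) → (Fin (L + 1) → α) → ℝ}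
    (hA : Measurable fun q : (Fin n0 → α) × (Fin (L + 1) → α) => A q.1 q.2) :
    Measurable (phi2 n0 L p p1 p2 A) := by
  apply measurable_pi_lambda
  intro i
  unfold phi2
  split_ifs with h h2
  · exact hA.comp (measurable_fst.prodMk (measurable_pi_lambda _ fun l =>
      (measurable_pi_apply _).comp (measurable_fst.comp measurable_snd)))
  · exact hA.comp (measurable_fst.prodMk (measurable_pi_lambda _ fun l =>
      (measurable_pi_apply _).comp (measurable_snd.comp measurable_snd)))
  · exact measurable_const

lemma chain_step {Ω β γ1 γ2 γ3 : Type*} [MeasurableSpace Ω] [MeasurableSpace β]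
    [MeasurableSpace γ1] [MeasurableSpace γ2] [MeasurableSpace γ3]
    (P : Measure Ω) [IsProbabilityMeasure P] (Z Z' : Ω → β)
    (hZ : Measurable Z) (hZ' : Measurable Z')
    (hcopy : P.map Z' = P.map Z)
    (hindep : ProbabilityTheory.IndepFun Z Z' P)
    (f : β → γ1) (g : β → γ2) (hf : Measurable f) (hg : Measurable g)
    (Φ : γ1 × γ2 → γ3) (hΦ : Measurable Φ) (D : Ω → γ3) (hD : Measurable D)
    (βs βg : ℝ) (νp : Measure γ2) (hνp : IsProbabilityMeasure νp)
    (h1 : dTVm (P.map D) (P.map (fun ω => Φ (f (Z ω), g (Z' ω)))) ≤ βs)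
    (h2 : dTVm (P.map (fun ω => g (Z ω))) νp ≤ βg) :
    dTVm (P.map D) ((((P.map Z).map f).prod νp).map Φ) ≤ βs + βg := by
  haveI := hνp
  have hfZ : Measurable (fun ω => f (Z ω)) := hf.comp hZ
  have hgZ : Measurable (fun ω => g (Z ω)) := hg.comp hZ
  have hgZ' : Measurable (fun ω => g (Z' ω)) := hg.comp hZ'
  have hA2m : Measurable (fun ω => Φ (f (Z ω), g (Z' ω))) :=
    hΦ.comp (hfZ.prodMk hgZ')
  -- law of g ∘ Z' equals law of g ∘ Z
  have hglaw : P.map (fun ω => g (Z' ω)) = P.map (fun ω => g (Z ω)) := by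
    calc P.map (fun ω => g (Z' ω)) = (P.map Z').map g := (Measure.map_map hg hZ').symm
      _ = (P.map Z).map g := by rw [hcopy]
      _ = P.map (fun ω => g (Z ω)) := Measure.map_map hg hZ
  -- product structure of the law of A2
  have hI : ProbabilityTheory.IndepFun (fun ω => f (Z ω)) (fun ω => g (Z' ω)) P :=
    hindep.comp hf hg
  have hpair0 : P.map (fun ω => (f (Z ω), g (Z' ω)))
      = (P.map (fun ω => f (Z ω))).prod (P.map (fun ω => g (Z' ω))) :=
    (ProbabilityTheory.indepFun_iff_map_prod_eq_prod_map_map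
      hfZ.aemeasurable hgZ'.aemeasurable).mp hI
  have hfZlaw : P.map (fun ω => f (Z ω)) = (P.map Z).map f :=
    (Measure.map_map hf hZ).symm
  have hpair : P.map (fun ω => (f (Z ω), g (Z' ω)))
      = ((P.map Z).map f).prod (P.map (fun ω => g (Z ω))) := by
    rw [hpair0, hfZlaw, hglaw]
  have hmapA2 : P.map (fun ω => Φ (f (Z ω), g (Z' ω)))
      = (((P.map Z).map f).prod (P.map (fun ω => g (Z ω)))).map Φ := by
    rw [← hpair, Measure.map_map hΦ (hfZ.prodMk hgZ')]
    rfl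
  -- probability instances
  haveI : IsProbabilityMeasure (P.map D) := Measure.isProbabilityMeasure_map hD.aemeasurable
  haveI : IsProbabilityMeasure (P.map (fun ω => Φ (f (Z ω), g (Z' ω)))) :=
    Measure.isProbabilityMeasure_map hA2m.aemeasurable
  haveI : IsProbabilityMeasure ((P.map Z).map f) := by
    haveI : IsProbabilityMeasure (P.map Z) := Measure.isProbabilityMeasure_map hZ.aemeasurable
    exact Measure.isProbabilityMeasure_map hf.aemeasurable
  haveI : IsProbabilityMeasure (P.map (fun ω => g (Z ω))) :=
    Measure.isProbabilityMeasure_map hgZ.aemeasurable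
  haveI : IsProbabilityMeasure ((((P.map Z).map f).prod νp).map Φ) :=
    Measure.isProbabilityMeasure_map hΦ.aemeasurable
  calc dTVm (P.map D) ((((P.map Z).map f).prod νp).map Φ)
      ≤ dTVm (P.map D) (P.map (fun ω => Φ (f (Z ω), g (Z' ω))))
        + dTVm (P.map (fun ω => Φ (f (Z ω), g (Z' ω)))) ((((P.map Z).map f).prod νp).map Φ) :=
        dTVm_triangle _ _ _
    _ ≤ βs + βg := by
        refine add_le_add h1 ?_
        rw [hmapA2]
        refine le_trans (dTVm_map_le _ _ hΦ) ?_
        exact le_trans (dTVm_prod_le _ _ _) h2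

end SBaux

namespace SBaux

open ProbabilityTheory

lemma fin_app_congr {β : Sort*} {N : ℕ} (f : Fin N → β) {a b : ℕ}
    (ha : a < N) (hb : b < N) (h : a = b) : f ⟨a, ha⟩ = f ⟨b, hb⟩ := by
  subst h; rfl

lemma conformal_chainA {Ω α : Type*} [MeasurableSpace Ω] [MeasurableSpace α]
    (P : Measure Ω) [IsProbabilityMeasure P] {n0 n1 L : ℕ} (hn0 : 1 ≤ n0)
    (Z Z' : Ω → Fin (n0 + n1 + 1) → α) (hZ : Measurable Z) (hZ' : Measurable Z')
    (hst : Stationary P Z) (hcopy : Measure.map Z' P = Measure.map Z P)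
    (hindep : ProbabilityTheory.IndepFun Z Z' P)
    {A : (Fin n0 → α) → (Fin (L + 1) → α) → ℝ}
    (hA : Measurable fun q : (Fin n0 → α) × (Fin (L + 1) → α) => A q.1 q.2)
    (τs τg p p1 p2 d1 d2 : ℕ)
    (hp2pos : 1 ≤ p2)
    (hd1 : n0 ≤ d1) (hd2 : n0 ≤ d2)
    (hgap : d2 = d1 + p1 + L + τg)
    (hb1 : d1 + τs + p1 + L ≤ n0 + n1 + 1)
    (hb2 : d2 + τs + p2 + L ≤ n0 + n1 + 1)
    (D : Ω → Fin p → ℝ)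
    (hDeq : D = fun ω => phi2 n0 L p p1 p2 A
      ((fun t : Fin n0 => Z ω ⟨t.val, by have := t.isLt; omega⟩),
       ((fun j : Fin (p1 + L) => Z ω ⟨d1 + τs + j.val, by have := j.isLt; omega⟩),
        (fun j : Fin (p2 + L) => Z ω ⟨d2 + τs + j.val, by have := j.isLt; omega⟩)))) :
    dTVm (P.map D)
      ((((P.map Z).map (fun z : Fin (n0 + n1 + 1) → α =>
            fun t : Fin n0 => z ⟨t.val, by have := t.isLt; omega⟩)).prod
        ((P.map (fun ω (j : Fin (p1 + L)) => Z ω ⟨j.val, by have := j.isLt; omega⟩)).prod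
         (P.map (fun ω (j : Fin (p2 + L)) => Z ω ⟨j.val, by have := j.isLt; omega⟩)))).map
        (phi2 n0 L p p1 p2 A))
      ≤ betaMix P (n0 + n1) Z Z' τs + betaMix P (n0 + n1) Z Z' τg := by
  classical
  have hτs1 : τs ≤ n1 := by omega
  -- measurable restriction maps
  have hfm : Measurable (fun z : Fin (n0 + n1 + 1) → α =>
      fun t : Fin n0 => z ⟨t.val, by have := t.isLt; omega⟩) :=
    measurable_pi_lambda _ (fun t => measurable_pi_apply _)
  have hgm : Measurable (fun z : Fin (n0 + n1 + 1) → α =>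
      ((fun j : Fin (p1 + L) => z ⟨d1 + τs + j.val, by have := j.isLt; omega⟩),
       (fun j : Fin (p2 + L) => z ⟨d2 + τs + j.val, by have := j.isLt; omega⟩))) :=
    (measurable_pi_lambda _ fun _ => measurable_pi_apply _).prodMk
      (measurable_pi_lambda _ fun _ => measurable_pi_apply _)
  have hΦ : Measurable (phi2 n0 L p p1 p2 A) := measurable_phi2 n0 L p p1 p2 hA
  have hD : Measurable D := by
    rw [hDeq]; exact hΦ.comp ((hfm.comp hZ).prodMk (hgm.comp hZ))
  have hv1m : Measurable (fun ω (j : Fin (p1 + L)) =>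
      Z ω ⟨j.val, by have := j.isLt; omega⟩) :=
    measurable_pi_lambda _ fun _ => (measurable_pi_apply _).comp hZ
  have hv2m : Measurable (fun ω (j : Fin (p2 + L)) =>
      Z ω ⟨j.val, by have := j.isLt; omega⟩) :=
    measurable_pi_lambda _ fun _ => (measurable_pi_apply _).comp hZ
  haveI : IsProbabilityMeasure (P.map (fun ω (j : Fin (p1 + L)) =>
      Z ω ⟨j.val, by have := j.isLt; omega⟩)) := Measure.isProbabilityMeasure_map hv1m.aemeasurable
  haveI : IsProbabilityMeasure (P.map (fun ω (j : Fin (p2 + L)) =>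
      Z ω ⟨j.val, by have := j.isLt; omega⟩)) := Measure.isProbabilityMeasure_map hv2m.aemeasurable
  refine chain_step P Z Z' hZ hZ' hcopy hindep
    (fun z : Fin (n0 + n1 + 1) → α => fun t : Fin n0 => z ⟨t.val, by have := t.isLt; omega⟩)
    (fun z : Fin (n0 + n1 + 1) → α =>
      ((fun j : Fin (p1 + L) => z ⟨d1 + τs + j.val, by have := j.isLt; omega⟩),
       (fun j : Fin (p2 + L) => z ⟨d2 + τs + j.val, by have := j.isLt; omega⟩)))
    hfm hgm (phi2 n0 L p p1 p2 A) hΦ D hD _ _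
    ((P.map (fun ω (j : Fin (p1 + L)) => Z ω ⟨j.val, by have := j.isLt; omega⟩)).prod
     (P.map (fun ω (j : Fin (p2 + L)) => Z ω ⟨j.val, by have := j.isLt; omega⟩)))
    inferInstance ?h1 ?h2
  case h1 =>
    show dTVm (P.map D) (P.map (fun ω => phi2 n0 L p p1 p2 A
      ((fun t : Fin n0 => Z ω ⟨t.val, by have := t.isLt; omega⟩),
       ((fun j : Fin (p1 + L) => Z' ω ⟨d1 + τs + j.val, by have := j.isLt; omega⟩),
        (fun j : Fin (p2 + L) => Z' ω ⟨d2 + τs + j.val, by have := j.isLt; omega⟩)))))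
      ≤ betaMix P (n0 + n1) Z Z' τs
    have hcut0 : n0 - 1 < n0 + n1 - τs := by omega
    set Gs : (Fin (n0 + n1 + 1 - τs) → α) → (Fin p → ℝ) := fun c =>
      phi2 n0 L p p1 p2 A
        ((fun t : Fin n0 => c ⟨t.val, by have := t.isLt; omega⟩),
         ((fun j : Fin (p1 + L) => c ⟨d1 + j.val, by have := j.isLt; omega⟩),
          (fun j : Fin (p2 + L) => c ⟨d2 + j.val, by have := j.isLt; omega⟩))) with hGsdef
    have hGs : Measurable Gs := by
      rw [hGsdef]
      exact hΦ.comp ((measurable_pi_lambda _ fun _ => measurable_pi_apply _).prodMk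
        ((measurable_pi_lambda _ fun _ => measurable_pi_apply _).prodMk
         (measurable_pi_lambda _ fun _ => measurable_pi_apply _)))
    have E1 : D = fun ω => Gs (fun i : Fin (n0 + n1 + 1 - τs) =>
        if i.val < (n0 - 1) + 1 then Z ω ⟨i.val, by have := i.isLt; omega⟩
        else Z ω ⟨i.val + τs, by have := i.isLt; omega⟩) := by
      rw [hDeq, hGsdef]
      funext ω
      beta_reduce
      try simp only [Fin.val_mk]
      refine congrArg (phi2 n0 L p p1 p2 A) ?_
      simp only [Prod.mk.injEq]
      refine ⟨?_, ?_, ?_⟩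
      · funext t
        rw [if_pos (show t.val < (n0 - 1) + 1 by omega)]
      · funext j
        rw [if_neg (show ¬ (d1 + j.val < (n0 - 1) + 1) by omega)]
        exact fin_app_congr (Z ω) _ _ (by omega)
      · funext j
        rw [if_neg (show ¬ (d2 + j.val < (n0 - 1) + 1) by omega)]
        exact fin_app_congr (Z ω) _ _ (by omega)
    have E2 : (fun ω => phi2 n0 L p p1 p2 A
        ((fun t : Fin n0 => Z ω ⟨t.val, by have := t.isLt; omega⟩),
         ((fun j : Fin (p1 + L) => Z' ω ⟨d1 + τs + j.val, by have := j.isLt; omega⟩),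
          (fun j : Fin (p2 + L) => Z' ω ⟨d2 + τs + j.val, by have := j.isLt; omega⟩))))
        = fun ω => Gs (fun i : Fin (n0 + n1 + 1 - τs) =>
        if i.val < (n0 - 1) + 1 then Z ω ⟨i.val, by have := i.isLt; omega⟩
        else Z' ω ⟨i.val + τs, by have := i.isLt; omega⟩) := by
      rw [hGsdef]
      funext ω
      beta_reduce
      try simp only [Fin.val_mk]
      refine congrArg (phi2 n0 L p p1 p2 A) ?_
      simp only [Prod.mk.injEq]
      refine ⟨?_, ?_, ?_⟩
      · funext t
        rw [if_pos (show t.val < (n0 - 1) + 1 by omega)]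
      · funext j
        rw [if_neg (show ¬ (d1 + j.val < (n0 - 1) + 1) by omega)]
        exact fin_app_congr (Z' ω) _ _ (by omega)
      · funext j
        rw [if_neg (show ¬ (d2 + j.val < (n0 - 1) + 1) by omega)]
        exact fin_app_congr (Z' ω) _ _ (by omega)
    rw [E1, E2]
    exact step_beta P Z Z' hZ hZ' τs ⟨n0 - 1, hcut0⟩ Gs hGs
  case h2 =>
    show dTVm (P.map (fun ω =>
        ((fun j : Fin (p1 + L) => Z ω ⟨d1 + τs + j.val, by have := j.isLt; omega⟩),
         (fun j : Fin (p2 + L) => Z ω ⟨d2 + τs + j.val, by have := j.isLt; omega⟩))))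
      ((P.map (fun ω (j : Fin (p1 + L)) => Z ω ⟨j.val, by have := j.isLt; omega⟩)).prod
       (P.map (fun ω (j : Fin (p2 + L)) => Z ω ⟨j.val, by have := j.isLt; omega⟩)))
      ≤ betaMix P (n0 + n1) Z Z' τg
    have hcutg : d1 + τs + p1 + L - 1 < n0 + n1 - τg := by omega
    set Hs : (Fin (n0 + n1 + 1 - τg) → α) →
        ((Fin (p1 + L) → α) × (Fin (p2 + L) → α)) := fun c =>
      ((fun j : Fin (p1 + L) => c ⟨d1 + τs + j.val, by have := j.isLt; omega⟩),
       (fun j : Fin (p2 + L) => c ⟨d1 + τs + p1 + L + j.val, by have := j.isLt; omega⟩)) with hHsdef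
    have hHs : Measurable Hs := by
      rw [hHsdef]
      exact (measurable_pi_lambda _ fun _ => measurable_pi_apply _).prodMk
        (measurable_pi_lambda _ fun _ => measurable_pi_apply _)
    have E3 : (fun ω =>
        ((fun j : Fin (p1 + L) => Z ω ⟨d1 + τs + j.val, by have := j.isLt; omega⟩),
         (fun j : Fin (p2 + L) => Z ω ⟨d2 + τs + j.val, by have := j.isLt; omega⟩)))
        = fun ω => Hs (fun i : Fin (n0 + n1 + 1 - τg) =>
          if i.val < (d1 + τs + p1 + L - 1) + 1 then Z ω ⟨i.val, by have := i.isLt; omega⟩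
          else Z ω ⟨i.val + τg, by have := i.isLt; omega⟩) := by
      rw [hHsdef]
      funext ω
      beta_reduce
      simp only [Fin.val_mk, Prod.mk.injEq]
      refine ⟨?_, ?_⟩
      · funext j
        rw [if_pos (show d1 + τs + j.val < (d1 + τs + p1 + L - 1) + 1 by omega)]
      · funext j
        rw [if_neg (show ¬ (d1 + τs + p1 + L + j.val < (d1 + τs + p1 + L - 1) + 1) by omega)]
        exact fin_app_congr (Z ω) _ _ (by omega)
    have E4 : (fun ω =>
        ((fun j : Fin (p1 + L) => Z ω ⟨d1 + τs + j.val, by have := j.isLt; omega⟩),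
         (fun j : Fin (p2 + L) => Z' ω ⟨d2 + τs + j.val, by have := j.isLt; omega⟩)))
        = fun ω => Hs (fun i : Fin (n0 + n1 + 1 - τg) =>
          if i.val < (d1 + τs + p1 + L - 1) + 1 then Z ω ⟨i.val, by have := i.isLt; omega⟩
          else Z' ω ⟨i.val + τg, by have := i.isLt; omega⟩) := by
      rw [hHsdef]
      funext ω
      beta_reduce
      simp only [Fin.val_mk, Prod.mk.injEq]
      refine ⟨?_, ?_⟩
      · funext j
        rw [if_pos (show d1 + τs + j.val < (d1 + τs + p1 + L - 1) + 1 by omega)]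
      · funext j
        rw [if_neg (show ¬ (d1 + τs + p1 + L + j.val < (d1 + τs + p1 + L - 1) + 1) by omega)]
        exact fin_app_congr (Z' ω) _ _ (by omega)
    have mix := step_beta P Z Z' hZ hZ' τg ⟨d1 + τs + p1 + L - 1, hcutg⟩ Hs hHs
    rw [← E3, ← E4] at mix
    -- identify the law of the mixed pair with the product of stationary block laws
    have hru : Measurable (fun z : Fin (n0 + n1 + 1) → α =>
        fun j : Fin (p1 + L) => z ⟨d1 + τs + j.val, by have := j.isLt; omega⟩) :=
      measurable_pi_lambda _ fun _ => measurable_pi_apply _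
    have hrv : Measurable (fun z : Fin (n0 + n1 + 1) → α =>
        fun j : Fin (p2 + L) => z ⟨d2 + τs + j.val, by have := j.isLt; omega⟩) :=
      measurable_pi_lambda _ fun _ => measurable_pi_apply _
    have hu : Measurable (fun ω (j : Fin (p1 + L)) =>
        Z ω ⟨d1 + τs + j.val, by have := j.isLt; omega⟩) := hru.comp hZ
    have hv : Measurable (fun ω (j : Fin (p2 + L)) =>
        Z' ω ⟨d2 + τs + j.val, by have := j.isLt; omega⟩) := hrv.comp hZ'
    have hI : ProbabilityTheory.IndepFun
        (fun ω (j : Fin (p1 + L)) => Z ω ⟨d1 + τs + j.val, by have := j.isLt; omega⟩)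
        (fun ω (j : Fin (p2 + L)) => Z' ω ⟨d2 + τs + j.val, by have := j.isLt; omega⟩)
        P := hindep.comp hru hrv
    have hprodeq : P.map (fun ω =>
        ((fun j : Fin (p1 + L) => Z ω ⟨d1 + τs + j.val, by have := j.isLt; omega⟩),
         (fun j : Fin (p2 + L) => Z' ω ⟨d2 + τs + j.val, by have := j.isLt; omega⟩)))
        = (P.map (fun ω (j : Fin (p1 + L)) =>
            Z ω ⟨d1 + τs + j.val, by have := j.isLt; omega⟩)).prod
          (P.map (fun ω (j : Fin (p2 + L)) =>
            Z' ω ⟨d2 + τs + j.val, by have := j.isLt; omega⟩)) :=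
      (ProbabilityTheory.indepFun_iff_map_prod_eq_prod_map_map
        hu.aemeasurable hv.aemeasurable).mp hI
    have hmidlaw : P.map (fun ω =>
        ((fun j : Fin (p1 + L) => Z ω ⟨d1 + τs + j.val, by have := j.isLt; omega⟩),
         (fun j : Fin (p2 + L) => Z' ω ⟨d2 + τs + j.val, by have := j.isLt; omega⟩)))
        = (P.map (fun ω (j : Fin (p1 + L)) => Z ω ⟨j.val, by have := j.isLt; omega⟩)).prod
          (P.map (fun ω (j : Fin (p2 + L)) => Z ω ⟨j.val, by have := j.isLt; omega⟩)) := by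
      rw [hprodeq]
      congr 1
      · exact hst (p1 + L) (d1 + τs) (by omega)
      · calc P.map (fun ω (j : Fin (p2 + L)) =>
              Z' ω ⟨d2 + τs + j.val, by have := j.isLt; omega⟩)
            = (P.map Z').map (fun z : Fin (n0 + n1 + 1) → α => fun (j : Fin (p2 + L)) =>
                z ⟨d2 + τs + j.val, by have := j.isLt; omega⟩) :=
              (Measure.map_map hrv hZ').symm
          _ = (P.map Z).map (fun z : Fin (n0 + n1 + 1) → α => fun (j : Fin (p2 + L)) =>
                z ⟨d2 + τs + j.val, by have := j.isLt; omega⟩) := by rw [hcopy]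
          _ = P.map (fun ω (j : Fin (p2 + L)) =>
                Z ω ⟨d2 + τs + j.val, by have := j.isLt; omega⟩) :=
              Measure.map_map hrv hZ
          _ = P.map (fun ω (j : Fin (p2 + L)) => Z ω ⟨j.val, by have := j.isLt; omega⟩) :=
              hst (p2 + L) (d2 + τs) (by omega)
    rw [hmidlaw] at mix
    exact mix

end SBaux

namespace SBaux

open ProbabilityTheory

lemma conformal_chainB {Ω α : Type*} [MeasurableSpace Ω] [MeasurableSpace α]
    (P : Measure Ω) [IsProbabilityMeasure P] {n0 n1 L : ℕ} (hn0 : 1 ≤ n0)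
    (Z Z' : Ω → Fin (n0 + n1 + 1) → α) (hZ : Measurable Z) (hZ' : Measurable Z')
    (hst : Stationary P Z) (hcopy : Measure.map Z' P = Measure.map Z P)
    (hindep : ProbabilityTheory.IndepFun Z Z' P)
    {A : (Fin n0 → α) → (Fin (L + 1) → α) → ℝ}
    (hA : Measurable fun q : (Fin n0 → α) × (Fin (L + 1) → α) => A q.1 q.2)
    (τs τg p p1 p2 d1 d2 : ℕ)
    (hp1pos : 1 ≤ p1)
    (hd1 : n0 ≤ d1) (hd2 : n0 ≤ d2)
    (hgap : d1 = d2 + p2 + L + τg)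
    (hb1 : d1 + τs + p1 + L ≤ n0 + n1 + 1)
    (hb2 : d2 + τs + p2 + L ≤ n0 + n1 + 1)
    (D : Ω → Fin p → ℝ)
    (hDeq : D = fun ω => phi2 n0 L p p1 p2 A
      ((fun t : Fin n0 => Z ω ⟨t.val, by have := t.isLt; omega⟩),
       ((fun j : Fin (p1 + L) => Z ω ⟨d1 + τs + j.val, by have := j.isLt; omega⟩),
        (fun j : Fin (p2 + L) => Z ω ⟨d2 + τs + j.val, by have := j.isLt; omega⟩)))) :
    dTVm (P.map D)
      ((((P.map Z).map (fun z : Fin (n0 + n1 + 1) → α =>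
            fun t : Fin n0 => z ⟨t.val, by have := t.isLt; omega⟩)).prod
        ((P.map (fun ω (j : Fin (p1 + L)) => Z ω ⟨j.val, by have := j.isLt; omega⟩)).prod
         (P.map (fun ω (j : Fin (p2 + L)) => Z ω ⟨j.val, by have := j.isLt; omega⟩)))).map
        (phi2 n0 L p p1 p2 A))
      ≤ betaMix P (n0 + n1) Z Z' τs + betaMix P (n0 + n1) Z Z' τg := by
  classical
  have hτs1 : τs ≤ n1 := by omega
  have hfm : Measurable (fun z : Fin (n0 + n1 + 1) → α =>
      fun t : Fin n0 => z ⟨t.val, by have := t.isLt; omega⟩) :=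
    measurable_pi_lambda _ (fun t => measurable_pi_apply _)
  have hgm : Measurable (fun z : Fin (n0 + n1 + 1) → α =>
      ((fun j : Fin (p1 + L) => z ⟨d1 + τs + j.val, by have := j.isLt; omega⟩),
       (fun j : Fin (p2 + L) => z ⟨d2 + τs + j.val, by have := j.isLt; omega⟩))) :=
    (measurable_pi_lambda _ fun _ => measurable_pi_apply _).prodMk
      (measurable_pi_lambda _ fun _ => measurable_pi_apply _)
  have hΦ : Measurable (phi2 n0 L p p1 p2 A) := measurable_phi2 n0 L p p1 p2 hA
  have hD : Measurable D := by
    rw [hDeq]; exact hΦ.comp ((hfm.comp hZ).prodMk (hgm.comp hZ))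
  have hv1m : Measurable (fun ω (j : Fin (p1 + L)) =>
      Z ω ⟨j.val, by have := j.isLt; omega⟩) :=
    measurable_pi_lambda _ fun _ => (measurable_pi_apply _).comp hZ
  have hv2m : Measurable (fun ω (j : Fin (p2 + L)) =>
      Z ω ⟨j.val, by have := j.isLt; omega⟩) :=
    measurable_pi_lambda _ fun _ => (measurable_pi_apply _).comp hZ
  haveI : IsProbabilityMeasure (P.map (fun ω (j : Fin (p1 + L)) =>
      Z ω ⟨j.val, by have := j.isLt; omega⟩)) := Measure.isProbabilityMeasure_map hv1m.aemeasurable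
  haveI : IsProbabilityMeasure (P.map (fun ω (j : Fin (p2 + L)) =>
      Z ω ⟨j.val, by have := j.isLt; omega⟩)) := Measure.isProbabilityMeasure_map hv2m.aemeasurable
  refine chain_step P Z Z' hZ hZ' hcopy hindep
    (fun z : Fin (n0 + n1 + 1) → α => fun t : Fin n0 => z ⟨t.val, by have := t.isLt; omega⟩)
    (fun z : Fin (n0 + n1 + 1) → α =>
      ((fun j : Fin (p1 + L) => z ⟨d1 + τs + j.val, by have := j.isLt; omega⟩),
       (fun j : Fin (p2 + L) => z ⟨d2 + τs + j.val, by have := j.isLt; omega⟩)))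
    hfm hgm (phi2 n0 L p p1 p2 A) hΦ D hD _ _
    ((P.map (fun ω (j : Fin (p1 + L)) => Z ω ⟨j.val, by have := j.isLt; omega⟩)).prod
     (P.map (fun ω (j : Fin (p2 + L)) => Z ω ⟨j.val, by have := j.isLt; omega⟩)))
    inferInstance ?h1 ?h2
  case h1 =>
    show dTVm (P.map D) (P.map (fun ω => phi2 n0 L p p1 p2 A
      ((fun t : Fin n0 => Z ω ⟨t.val, by have := t.isLt; omega⟩),
       ((fun j : Fin (p1 + L) => Z' ω ⟨d1 + τs + j.val, by have := j.isLt; omega⟩),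
        (fun j : Fin (p2 + L) => Z' ω ⟨d2 + τs + j.val, by have := j.isLt; omega⟩)))))
      ≤ betaMix P (n0 + n1) Z Z' τs
    have hcut0 : n0 - 1 < n0 + n1 - τs := by omega
    set Gs : (Fin (n0 + n1 + 1 - τs) → α) → (Fin p → ℝ) := fun c =>
      phi2 n0 L p p1 p2 A
        ((fun t : Fin n0 => c ⟨t.val, by have := t.isLt; omega⟩),
         ((fun j : Fin (p1 + L) => c ⟨d1 + j.val, by have := j.isLt; omega⟩),
          (fun j : Fin (p2 + L) => c ⟨d2 + j.val, by have := j.isLt; omega⟩))) with hGsdef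
    have hGs : Measurable Gs := by
      rw [hGsdef]
      exact hΦ.comp ((measurable_pi_lambda _ fun _ => measurable_pi_apply _).prodMk
        ((measurable_pi_lambda _ fun _ => measurable_pi_apply _).prodMk
         (measurable_pi_lambda _ fun _ => measurable_pi_apply _)))
    have E1 : D = fun ω => Gs (fun i : Fin (n0 + n1 + 1 - τs) =>
        if i.val < (n0 - 1) + 1 then Z ω ⟨i.val, by have := i.isLt; omega⟩
        else Z ω ⟨i.val + τs, by have := i.isLt; omega⟩) := by
      rw [hDeq, hGsdef]
      funext ω
      beta_reduce
      try simp only [Fin.val_mk]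
      refine congrArg (phi2 n0 L p p1 p2 A) ?_
      simp only [Prod.mk.injEq]
      refine ⟨?_, ?_, ?_⟩
      · funext t
        rw [if_pos (show t.val < (n0 - 1) + 1 by omega)]
      · funext j
        rw [if_neg (show ¬ (d1 + j.val < (n0 - 1) + 1) by omega)]
        exact fin_app_congr (Z ω) _ _ (by omega)
      · funext j
        rw [if_neg (show ¬ (d2 + j.val < (n0 - 1) + 1) by omega)]
        exact fin_app_congr (Z ω) _ _ (by omega)
    have E2 : (fun ω => phi2 n0 L p p1 p2 A
        ((fun t : Fin n0 => Z ω ⟨t.val, by have := t.isLt; omega⟩),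
         ((fun j : Fin (p1 + L) => Z' ω ⟨d1 + τs + j.val, by have := j.isLt; omega⟩),
          (fun j : Fin (p2 + L) => Z' ω ⟨d2 + τs + j.val, by have := j.isLt; omega⟩))))
        = fun ω => Gs (fun i : Fin (n0 + n1 + 1 - τs) =>
        if i.val < (n0 - 1) + 1 then Z ω ⟨i.val, by have := i.isLt; omega⟩
        else Z' ω ⟨i.val + τs, by have := i.isLt; omega⟩) := by
      rw [hGsdef]
      funext ω
      beta_reduce
      try simp only [Fin.val_mk]
      refine congrArg (phi2 n0 L p p1 p2 A) ?_
      simp only [Prod.mk.injEq]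
      refine ⟨?_, ?_, ?_⟩
      · funext t
        rw [if_pos (show t.val < (n0 - 1) + 1 by omega)]
      · funext j
        rw [if_neg (show ¬ (d1 + j.val < (n0 - 1) + 1) by omega)]
        exact fin_app_congr (Z' ω) _ _ (by omega)
      · funext j
        rw [if_neg (show ¬ (d2 + j.val < (n0 - 1) + 1) by omega)]
        exact fin_app_congr (Z' ω) _ _ (by omega)
    rw [E1, E2]
    exact step_beta P Z Z' hZ hZ' τs ⟨n0 - 1, hcut0⟩ Gs hGs
  case h2 =>
    show dTVm (P.map (fun ω =>
        ((fun j : Fin (p1 + L) => Z ω ⟨d1 + τs + j.val, by have := j.isLt; omega⟩),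
         (fun j : Fin (p2 + L) => Z ω ⟨d2 + τs + j.val, by have := j.isLt; omega⟩))))
      ((P.map (fun ω (j : Fin (p1 + L)) => Z ω ⟨j.val, by have := j.isLt; omega⟩)).prod
       (P.map (fun ω (j : Fin (p2 + L)) => Z ω ⟨j.val, by have := j.isLt; omega⟩)))
      ≤ betaMix P (n0 + n1) Z Z' τg
    have hcutg : d2 + τs + p2 + L - 1 < n0 + n1 - τg := by omega
    set Hs : (Fin (n0 + n1 + 1 - τg) → α) →
        ((Fin (p1 + L) → α) × (Fin (p2 + L) → α)) := fun c =>
      ((fun j : Fin (p1 + L) => c ⟨d2 + τs + p2 + L + j.val, by have := j.isLt; omega⟩),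
       (fun j : Fin (p2 + L) => c ⟨d2 + τs + j.val, by have := j.isLt; omega⟩)) with hHsdef
    have hHs : Measurable Hs := by
      rw [hHsdef]
      exact (measurable_pi_lambda _ fun _ => measurable_pi_apply _).prodMk
        (measurable_pi_lambda _ fun _ => measurable_pi_apply _)
    have E3 : (fun ω =>
        ((fun j : Fin (p1 + L) => Z ω ⟨d1 + τs + j.val, by have := j.isLt; omega⟩),
         (fun j : Fin (p2 + L) => Z ω ⟨d2 + τs + j.val, by have := j.isLt; omega⟩)))
        = fun ω => Hs (fun i : Fin (n0 + n1 + 1 - τg) =>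
          if i.val < (d2 + τs + p2 + L - 1) + 1 then Z ω ⟨i.val, by have := i.isLt; omega⟩
          else Z ω ⟨i.val + τg, by have := i.isLt; omega⟩) := by
      rw [hHsdef]
      funext ω
      beta_reduce
      simp only [Fin.val_mk, Prod.mk.injEq]
      refine ⟨?_, ?_⟩
      · funext j
        rw [if_neg (show ¬ (d2 + τs + p2 + L + j.val < (d2 + τs + p2 + L - 1) + 1) by omega)]
        exact fin_app_congr (Z ω) _ _ (by omega)
      · funext j
        rw [if_pos (show d2 + τs + j.val < (d2 + τs + p2 + L - 1) + 1 by omega)]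
    have E4 : (fun ω =>
        ((fun j : Fin (p1 + L) => Z' ω ⟨d1 + τs + j.val, by have := j.isLt; omega⟩),
         (fun j : Fin (p2 + L) => Z ω ⟨d2 + τs + j.val, by have := j.isLt; omega⟩)))
        = fun ω => Hs (fun i : Fin (n0 + n1 + 1 - τg) =>
          if i.val < (d2 + τs + p2 + L - 1) + 1 then Z ω ⟨i.val, by have := i.isLt; omega⟩
          else Z' ω ⟨i.val + τg, by have := i.isLt; omega⟩) := by
      rw [hHsdef]
      funext ω
      beta_reduce
      simp only [Fin.val_mk, Prod.mk.injEq]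
      refine ⟨?_, ?_⟩
      · funext j
        rw [if_neg (show ¬ (d2 + τs + p2 + L + j.val < (d2 + τs + p2 + L - 1) + 1) by omega)]
        exact fin_app_congr (Z' ω) _ _ (by omega)
      · funext j
        rw [if_pos (show d2 + τs + j.val < (d2 + τs + p2 + L - 1) + 1 by omega)]
    have mix := step_beta P Z Z' hZ hZ' τg ⟨d2 + τs + p2 + L - 1, hcutg⟩ Hs hHs
    rw [← E3, ← E4] at mix
    have hru : Measurable (fun z : Fin (n0 + n1 + 1) → α =>
        fun j : Fin (p1 + L) => z ⟨d1 + τs + j.val, by have := j.isLt; omega⟩) :=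
      measurable_pi_lambda _ fun _ => measurable_pi_apply _
    have hrv : Measurable (fun z : Fin (n0 + n1 + 1) → α =>
        fun j : Fin (p2 + L) => z ⟨d2 + τs + j.val, by have := j.isLt; omega⟩) :=
      measurable_pi_lambda _ fun _ => measurable_pi_apply _
    have hu : Measurable (fun ω (j : Fin (p1 + L)) =>
        Z' ω ⟨d1 + τs + j.val, by have := j.isLt; omega⟩) := hru.comp hZ'
    have hv : Measurable (fun ω (j : Fin (p2 + L)) =>
        Z ω ⟨d2 + τs + j.val, by have := j.isLt; omega⟩) := hrv.comp hZ
    have hI : ProbabilityTheory.IndepFun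
        (fun ω (j : Fin (p1 + L)) => Z' ω ⟨d1 + τs + j.val, by have := j.isLt; omega⟩)
        (fun ω (j : Fin (p2 + L)) => Z ω ⟨d2 + τs + j.val, by have := j.isLt; omega⟩)
        P := hindep.symm.comp hru hrv
    have hprodeq : P.map (fun ω =>
        ((fun j : Fin (p1 + L) => Z' ω ⟨d1 + τs + j.val, by have := j.isLt; omega⟩),
         (fun j : Fin (p2 + L) => Z ω ⟨d2 + τs + j.val, by have := j.isLt; omega⟩)))
        = (P.map (fun ω (j : Fin (p1 + L)) =>
            Z' ω ⟨d1 + τs + j.val, by have := j.isLt; omega⟩)).prod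
          (P.map (fun ω (j : Fin (p2 + L)) =>
            Z ω ⟨d2 + τs + j.val, by have := j.isLt; omega⟩)) :=
      (ProbabilityTheory.indepFun_iff_map_prod_eq_prod_map_map
        hu.aemeasurable hv.aemeasurable).mp hI
    have hmidlaw : P.map (fun ω =>
        ((fun j : Fin (p1 + L) => Z' ω ⟨d1 + τs + j.val, by have := j.isLt; omega⟩),
         (fun j : Fin (p2 + L) => Z ω ⟨d2 + τs + j.val, by have := j.isLt; omega⟩)))
        = (P.map (fun ω (j : Fin (p1 + L)) => Z ω ⟨j.val, by have := j.isLt; omega⟩)).prod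
          (P.map (fun ω (j : Fin (p2 + L)) => Z ω ⟨j.val, by have := j.isLt; omega⟩)) := by
      rw [hprodeq]
      congr 1
      · calc P.map (fun ω (j : Fin (p1 + L)) =>
              Z' ω ⟨d1 + τs + j.val, by have := j.isLt; omega⟩)
            = (P.map Z').map (fun z : Fin (n0 + n1 + 1) → α => fun (j : Fin (p1 + L)) =>
                z ⟨d1 + τs + j.val, by have := j.isLt; omega⟩) :=
              (Measure.map_map hru hZ').symm
          _ = (P.map Z).map (fun z : Fin (n0 + n1 + 1) → α => fun (j : Fin (p1 + L)) =>
                z ⟨d1 + τs + j.val, by have := j.isLt; omega⟩) := by rw [hcopy]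
          _ = P.map (fun ω (j : Fin (p1 + L)) =>
                Z ω ⟨d1 + τs + j.val, by have := j.isLt; omega⟩) :=
              Measure.map_map hru hZ
          _ = P.map (fun ω (j : Fin (p1 + L)) => Z ω ⟨j.val, by have := j.isLt; omega⟩) :=
              hst (p1 + L) (d1 + τs) (by omega)
      · exact hst (p2 + L) (d2 + τs) (by omega)
    rw [hmidlaw] at mix
    exact mix

end SBaux

namespace SBaux

open ProbabilityTheory

lemma conformal_chain0 {Ω α : Type*} [MeasurableSpace Ω] [MeasurableSpace α]
    (P : Measure Ω) [IsProbabilityMeasure P] {n0 n1 L : ℕ} (hn0 : 1 ≤ n0)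
    (Z Z' : Ω → Fin (n0 + n1 + 1) → α) (hZ : Measurable Z) (hZ' : Measurable Z')
    (hst : Stationary P Z) (hcopy : Measure.map Z' P = Measure.map Z P)
    (hindep : ProbabilityTheory.IndepFun Z Z' P)
    {A : (Fin n0 → α) → (Fin (L + 1) → α) → ℝ}
    (hA : Measurable fun q : (Fin n0 → α) × (Fin (L + 1) → α) => A q.1 q.2)
    (τs p d : ℕ) (hppos : 1 ≤ p)
    (hd : n0 ≤ d)
    (hb : d + τs + p + L ≤ n0 + n1 + 1)
    (D : Ω → Fin p → ℝ)
    (hDeq : D = fun ω => phi2 n0 L p 0 p A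
      ((fun t : Fin n0 => Z ω ⟨t.val, Nat.lt_of_lt_of_le t.isLt (by omega)⟩),
       ((fun j : Fin (0 + L) => Z ω ⟨d + τs + j.val, by have := j.isLt; omega⟩),
        (fun j : Fin (p + L) => Z ω ⟨d + τs + j.val, by have := j.isLt; omega⟩)))) :
    dTVm (P.map D)
      ((((P.map Z).map (fun z : Fin (n0 + n1 + 1) → α =>
            fun t : Fin n0 => z ⟨t.val, Nat.lt_of_lt_of_le t.isLt (by omega)⟩)).prod
        ((P.map (fun ω (j : Fin (p + L)) => Z ω ⟨j.val, by have := j.isLt; omega⟩)).map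
          (fun u : Fin (p + L) → α =>
            ((fun j : Fin (0 + L) => u ⟨j.val, by have := j.isLt; omega⟩), u)))).map
        (phi2 n0 L p 0 p A))
      ≤ betaMix P (n0 + n1) Z Z' τs := by
  classical
  have hτs1 : τs ≤ n1 := by omega
  have hfm : Measurable (fun z : Fin (n0 + n1 + 1) → α =>
      fun t : Fin n0 => z ⟨t.val, Nat.lt_of_lt_of_le t.isLt (by omega)⟩) :=
    measurable_pi_lambda _ (fun t => measurable_pi_apply _)
  have hgm : Measurable (fun z : Fin (n0 + n1 + 1) → α =>
      ((fun j : Fin (0 + L) => z ⟨d + τs + j.val, by have := j.isLt; omega⟩),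
       (fun j : Fin (p + L) => z ⟨d + τs + j.val, by have := j.isLt; omega⟩))) :=
    (measurable_pi_lambda _ fun _ => measurable_pi_apply _).prodMk
      (measurable_pi_lambda _ fun _ => measurable_pi_apply _)
  have hΦ : Measurable (phi2 n0 L p 0 p A) := measurable_phi2 n0 L p 0 p hA
  have hD : Measurable D := by
    rw [hDeq]; exact hΦ.comp ((hfm.comp hZ).prodMk (hgm.comp hZ))
  have hsplit : Measurable (fun u : Fin (p + L) → α =>
      ((fun j : Fin (0 + L) => u ⟨j.val, by have := j.isLt; omega⟩), u)) :=
    (measurable_pi_lambda _ fun _ => measurable_pi_apply _).prodMk measurable_id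
  have hblock0 : Measurable (fun ω (j : Fin (p + L)) =>
      Z ω ⟨j.val, by have := j.isLt; omega⟩) :=
    measurable_pi_lambda _ fun _ => (measurable_pi_apply _).comp hZ
  have hI1 : IsProbabilityMeasure (P.map (fun ω (j : Fin (p + L)) =>
      Z ω ⟨j.val, by have := j.isLt; omega⟩)) := Measure.isProbabilityMeasure_map hblock0.aemeasurable
  have hI2 : IsProbabilityMeasure ((P.map (fun ω (j : Fin (p + L)) =>
      Z ω ⟨j.val, by have := j.isLt; omega⟩)).map
        (fun u : Fin (p + L) → α =>
          ((fun j : Fin (0 + L) => u ⟨j.val, by have := j.isLt; omega⟩), u))) := by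
    refine ⟨?_⟩
    rw [Measure.map_apply hsplit MeasurableSet.univ]
    simpa using hI1.measure_univ
  refine le_trans (chain_step P Z Z' hZ hZ' hcopy hindep
    (fun z : Fin (n0 + n1 + 1) → α => fun t : Fin n0 => z ⟨t.val, Nat.lt_of_lt_of_le t.isLt (by omega)⟩)
    (fun z : Fin (n0 + n1 + 1) → α =>
      ((fun j : Fin (0 + L) => z ⟨d + τs + j.val, by have := j.isLt; omega⟩),
       (fun j : Fin (p + L) => z ⟨d + τs + j.val, by have := j.isLt; omega⟩)))
    hfm hgm (phi2 n0 L p 0 p A) hΦ D hD (betaMix P (n0 + n1) Z Z' τs) 0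
    ((P.map (fun ω (j : Fin (p + L)) => Z ω ⟨j.val, by have := j.isLt; omega⟩)).map
      (fun u : Fin (p + L) → α =>
        ((fun j : Fin (0 + L) => u ⟨j.val, by have := j.isLt; omega⟩), u)))
    hI2 ?h1 ?h2) (le_of_eq (add_zero _))
  case h1 =>
    show dTVm (P.map D) (P.map (fun ω => phi2 n0 L p 0 p A
      ((fun t : Fin n0 => Z ω ⟨t.val, Nat.lt_of_lt_of_le t.isLt (by omega)⟩),
       ((fun j : Fin (0 + L) => Z' ω ⟨d + τs + j.val, by have := j.isLt; omega⟩),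
        (fun j : Fin (p + L) => Z' ω ⟨d + τs + j.val, by have := j.isLt; omega⟩)))))
      ≤ betaMix P (n0 + n1) Z Z' τs
    have hcut0 : n0 - 1 < n0 + n1 - τs := by omega
    set Gs : (Fin (n0 + n1 + 1 - τs) → α) → (Fin p → ℝ) := fun c =>
      phi2 n0 L p 0 p A
        ((fun t : Fin n0 => c ⟨t.val, Nat.lt_of_lt_of_le t.isLt (by omega)⟩),
         ((fun j : Fin (0 + L) => c ⟨d + j.val, by have := j.isLt; omega⟩),
          (fun j : Fin (p + L) => c ⟨d + j.val, by have := j.isLt; omega⟩))) with hGsdef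
    have hGs : Measurable Gs := by
      rw [hGsdef]
      exact hΦ.comp ((measurable_pi_lambda _ fun _ => measurable_pi_apply _).prodMk
        ((measurable_pi_lambda _ fun _ => measurable_pi_apply _).prodMk
         (measurable_pi_lambda _ fun _ => measurable_pi_apply _)))
    have E1 : D = fun ω => Gs (fun i : Fin (n0 + n1 + 1 - τs) =>
        if i.val < (n0 - 1) + 1 then Z ω ⟨i.val, by have := i.isLt; omega⟩
        else Z ω ⟨i.val + τs, by have := i.isLt; omega⟩) := by
      rw [hDeq, hGsdef]
      funext ω
      beta_reduce
      try simp only [Fin.val_mk]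
      refine congrArg (phi2 n0 L p 0 p A) ?_
      simp only [Prod.mk.injEq]
      refine ⟨?_, ?_, ?_⟩
      · funext t
        rw [if_pos (show t.val < (n0 - 1) + 1 by omega)]
      · funext j
        rw [if_neg (show ¬ (d + j.val < (n0 - 1) + 1) by omega)]
        exact fin_app_congr (Z ω) _ _ (by omega)
      · funext j
        rw [if_neg (show ¬ (d + j.val < (n0 - 1) + 1) by omega)]
        exact fin_app_congr (Z ω) _ _ (by omega)
    have E2 : (fun ω => phi2 n0 L p 0 p A
        ((fun t : Fin n0 => Z ω ⟨t.val, Nat.lt_of_lt_of_le t.isLt (by omega)⟩),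
         ((fun j : Fin (0 + L) => Z' ω ⟨d + τs + j.val, by have := j.isLt; omega⟩),
          (fun j : Fin (p + L) => Z' ω ⟨d + τs + j.val, by have := j.isLt; omega⟩))))
        = fun ω => Gs (fun i : Fin (n0 + n1 + 1 - τs) =>
        if i.val < (n0 - 1) + 1 then Z ω ⟨i.val, by have := i.isLt; omega⟩
        else Z' ω ⟨i.val + τs, by have := i.isLt; omega⟩) := by
      rw [hGsdef]
      funext ω
      beta_reduce
      try simp only [Fin.val_mk]
      refine congrArg (phi2 n0 L p 0 p A) ?_
      simp only [Prod.mk.injEq]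
      refine ⟨?_, ?_, ?_⟩
      · funext t
        rw [if_pos (show t.val < (n0 - 1) + 1 by omega)]
      · funext j
        rw [if_neg (show ¬ (d + j.val < (n0 - 1) + 1) by omega)]
        exact fin_app_congr (Z' ω) _ _ (by omega)
      · funext j
        rw [if_neg (show ¬ (d + j.val < (n0 - 1) + 1) by omega)]
        exact fin_app_congr (Z' ω) _ _ (by omega)
    rw [E1, E2]
    exact step_beta P Z Z' hZ hZ' τs ⟨n0 - 1, hcut0⟩ Gs hGs
  case h2 =>
    show dTVm (P.map (fun ω =>
        ((fun j : Fin (0 + L) => Z ω ⟨d + τs + j.val, by have := j.isLt; omega⟩),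
         (fun j : Fin (p + L) => Z ω ⟨d + τs + j.val, by have := j.isLt; omega⟩))))
      ((P.map (fun ω (j : Fin (p + L)) => Z ω ⟨j.val, by have := j.isLt; omega⟩)).map
        (fun u : Fin (p + L) → α =>
          ((fun j : Fin (0 + L) => u ⟨j.val, by have := j.isLt; omega⟩), u)))
      ≤ 0
    have hblockd : Measurable (fun ω (j : Fin (p + L)) =>
        Z ω ⟨d + τs + j.val, by have := j.isLt; omega⟩) :=
      measurable_pi_lambda _ fun _ => (measurable_pi_apply _).comp hZ
    have hloweq : P.map (fun ω =>
        ((fun j : Fin (0 + L) => Z ω ⟨d + τs + j.val, by have := j.isLt; omega⟩),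
         (fun j : Fin (p + L) => Z ω ⟨d + τs + j.val, by have := j.isLt; omega⟩)))
        = (P.map (fun ω (j : Fin (p + L)) => Z ω ⟨j.val, by have := j.isLt; omega⟩)).map
          (fun u : Fin (p + L) → α =>
            ((fun j : Fin (0 + L) => u ⟨j.val, by have := j.isLt; omega⟩), u)) := by
      have step1 : P.map (fun ω =>
          ((fun j : Fin (0 + L) => Z ω ⟨d + τs + j.val, by have := j.isLt; omega⟩),
           (fun j : Fin (p + L) => Z ω ⟨d + τs + j.val, by have := j.isLt; omega⟩)))
          = (P.map (fun ω (j : Fin (p + L)) =>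
              Z ω ⟨d + τs + j.val, by have := j.isLt; omega⟩)).map
            (fun u : Fin (p + L) → α =>
              ((fun j : Fin (0 + L) => u ⟨j.val, by have := j.isLt; omega⟩), u)) := by
        rw [Measure.map_map hsplit hblockd]
        rfl
      rw [step1, hst (p + L) (d + τs) (by omega)]
    rw [hloweq]
    exact le_of_eq (dTVm_eq_zero rfl)

end SBaux

namespace SBaux

lemma prob_map {γ δ : Type*} [MeasurableSpace γ] [MeasurableSpace δ] {μ : Measure γ}
    (hμ : IsProbabilityMeasure μ) {f : γ → δ} (hf : Measurable f) :
    IsProbabilityMeasure (μ.map f) := by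
  haveI := hμ
  exact Measure.isProbabilityMeasure_map hf.aemeasurable

lemma prob_prod {γ δ : Type*} [MeasurableSpace γ] [MeasurableSpace δ]
    {μ : Measure γ} {ν : Measure δ}
    (hμ : IsProbabilityMeasure μ) (hν : IsProbabilityMeasure ν) :
    IsProbabilityMeasure (μ.prod ν) := by
  haveI := hμ; haveI := hν
  infer_instance

lemma combine {γ : Type*} [MeasurableSpace γ] {μ1 μ2 M : Measure γ}
    (h1p : IsProbabilityMeasure μ1) (h2p : IsProbabilityMeasure μ2)
    (hMp : IsProbabilityMeasure M)
    {a : ℝ} (h1 : dTVm μ1 M ≤ a) (h2 : dTVm μ2 M ≤ a) : dTVm μ1 μ2 ≤ a + a := by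
  haveI := h1p; haveI := h2p; haveI := hMp
  calc dTVm μ1 μ2 ≤ dTVm μ1 M + dTVm M μ2 := dTVm_triangle _ _ _
    _ ≤ a + a := add_le_add h1 (by rw [dTVm_comm]; exact h2)

end SBaux

/-- Proposition 3: switch coefficients of the truncated split-conformal score vector are
bounded by β-mixing coefficients of the stationary data sequence. -/
theorem stmt16 {Ω α : Type*} [MeasurableSpace Ω] [MeasurableSpace α]
    (P : Measure Ω) [IsProbabilityMeasure P] {n0 n1 L : ℕ} (hn0 : 1 ≤ n0) (hL : L < n1)
    (Z Z' : Ω → Fin (n0 + n1 + 1) → α) (hZ : Measurable Z) (hZ' : Measurable Z')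
    (hst : Stationary P Z) (hcopy : Measure.map Z' P = Measure.map Z P)
    (hindep : ProbabilityTheory.IndepFun Z Z' P)
    (A : (Fin n0 → α) → (Fin (L + 1) → α) → ℝ)
    (hA : Measurable fun p : (Fin n0 → α) × (Fin (L + 1) → α) => A p.1 p.2)
    (τ τs k : ℕ) (hτL : L ≤ τ) (hτ : τ ≤ n1 - τs) (hk1 : 1 ≤ k)
    (hk2 : k ≤ n1 - L + 1 - τs) :
    (k ≤ n1 - τ - τs →
        switchCoef P (fun ω (j : Fin (n1 - L + 1 - τs)) =>
            A (fun t : Fin n0 => Z ω ⟨t.val, by have := t.isLt; omega⟩)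
              (fun l : Fin (L + 1) =>
                Z ω ⟨n0 + L + τs + j.val - l.val, by have := j.isLt; omega⟩)) k τ
          ≤ 2 * betaMix P (n0 + n1) Z Z' τs + 2 * betaMix P (n0 + n1) Z Z' (τ - L)) ∧
      (n1 - τ - τs < k →
        switchCoef P (fun ω (j : Fin (n1 - L + 1 - τs)) =>
            A (fun t : Fin n0 => Z ω ⟨t.val, by have := t.isLt; omega⟩)
              (fun l : Fin (L + 1) =>
                Z ω ⟨n0 + L + τs + j.val - l.val, by have := j.isLt; omega⟩)) k τ
          ≤ 2 * betaMix P (n0 + n1) Z Z' τs) := by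
  classical
  set m := n1 - L + 1 - τs with hmdef
  have hbs := SBaux.betaMix_nonneg P (n0 + n1) Z Z' τs
  have hbg := SBaux.betaMix_nonneg P (n0 + n1) Z Z' (τ - L)
  set W : Ω → Fin m → ℝ := fun ω (j : Fin m) =>
    A (fun t : Fin n0 => Z ω ⟨t.val, by have := t.isLt; omega⟩)
      (fun l : Fin (L + 1) =>
        Z ω ⟨n0 + L + τs + j.val - l.val, by have := j.isLt; omega⟩) with hWdef
  have hWm : Measurable W := by
    rw [hWdef]
    apply measurable_pi_lambda
    intro j
    exact hA.comp ((measurable_pi_lambda _ fun t => (measurable_pi_apply _).comp hZ).prodMk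
      (measurable_pi_lambda _ fun l => (measurable_pi_apply _).comp hZ))
  have hD0m : Measurable (fun ω => delta0 m k τ (W ω)) := by
    apply measurable_pi_lambda
    intro i
    simp only [delta0]
    split_ifs
    · exact (measurable_pi_apply _).comp hWm
    · exact (measurable_pi_apply _).comp hWm
  have hD1m : Measurable (fun ω => delta1 m k τ (W ω)) := by
    apply measurable_pi_lambda
    intro i
    simp only [delta1]
    split_ifs
    · exact (measurable_pi_apply _).comp hWm
    · exact (measurable_pi_apply _).comp hWm
    · exact (measurable_pi_apply _).comp hWm
  have bound_deg : m ≤ τ → switchCoef P W k τ = 0 := by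
    intro h
    have hdd : (fun ω => delta0 m k τ (W ω)) = (fun ω => delta1 m k τ (W ω)) := by
      funext ω i
      exact absurd i.isLt (by omega)
    unfold switchCoef
    rw [hdd]
    exact SBaux.dTV_self P _
  -- Case a : k + τ < m
  have bound_a : τ < m → k + τ < m →
      switchCoef P W k τ ≤ 2 * betaMix P (n0 + n1) Z Z' τs
        + 2 * betaMix P (n0 + n1) Z Z' (τ - L) := by
    intro hpτ hab
    have hmeq : m + L + τs = n1 + 1 := by omega
    have hττs : τ + τs ≤ n1 := by omega
    have hD0eq : (fun ω => delta0 m k τ (W ω)) = fun ω =>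
        SBaux.phi2 n0 L (m - τ) (m - τ - k) k A
          ((fun t : Fin n0 => Z ω ⟨t.val, by have := t.isLt; omega⟩),
           ((fun j : Fin (m - τ - k + L) =>
              Z ω ⟨n0 + τs + j.val, by have := j.isLt; omega⟩),
            (fun j : Fin (k + L) =>
              Z ω ⟨n0 + (m - k) + τs + j.val, by have := j.isLt; omega⟩))) := by
      funext ω i
      simp only [hWdef, delta0, SBaux.phi2, Fin.val_mk]
      by_cases hi : i.val < m - τ - k
      · rw [if_pos hi, dif_pos hi]
        refine congrArg (A _) ?_
        funext l
        exact SBaux.fin_app_congr (Z ω) _ _ (by omega)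
      · rw [if_neg hi, dif_neg hi, dif_pos (show i.val - (m - τ - k) < k by
          have := i.isLt; omega)]
        refine congrArg (A _) ?_
        funext l
        exact SBaux.fin_app_congr (Z ω) _ _ (by omega)
    have hD1eq : (fun ω => delta1 m k τ (W ω)) = fun ω =>
        SBaux.phi2 n0 L (m - τ) (m - τ - k) k A
          ((fun t : Fin n0 => Z ω ⟨t.val, by have := t.isLt; omega⟩),
           ((fun j : Fin (m - τ - k + L) =>
              Z ω ⟨n0 + (k + τ) + τs + j.val, by have := j.isLt; omega⟩),
            (fun j : Fin (k + L) =>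
              Z ω ⟨n0 + τs + j.val, by have := j.isLt; omega⟩))) := by
      funext ω i
      simp only [hWdef, delta1, SBaux.phi2, Fin.val_mk]
      rw [dif_pos hab]
      by_cases hi : i.val < m - τ - k
      · rw [dif_pos hi, dif_pos hi]
        refine congrArg (A _) ?_
        funext l
        exact SBaux.fin_app_congr (Z ω) _ _ (by omega)
      · rw [dif_neg hi, dif_neg hi, dif_pos (show i.val - (m - τ - k) < k by
          have := i.isLt; omega)]
        refine congrArg (A _) ?_
        funext l
        exact SBaux.fin_app_congr (Z ω) _ _ (by omega)
    have chA := SBaux.conformal_chainA P hn0 Z Z' hZ hZ' hst hcopy hindep hA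
      τs (τ - L) (m - τ) (m - τ - k) k n0 (n0 + (m - k)) hk1 (le_refl n0) (by omega)
      (by omega) (by omega) (by omega) (fun ω => delta0 m k τ (W ω)) hD0eq
    have chB := SBaux.conformal_chainB P hn0 Z Z' hZ hZ' hst hcopy hindep hA
      τs (τ - L) (m - τ) (m - τ - k) k (n0 + (k + τ)) n0 (by omega) (by omega)
      (le_refl n0) (by omega) (by omega) (by omega)
      (fun ω => delta1 m k τ (W ω)) hD1eq
    have hfinal : SBaux.dTVm (P.map (fun ω => delta0 m k τ (W ω)))
        (P.map (fun ω => delta1 m k τ (W ω)))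
        ≤ (betaMix P (n0 + n1) Z Z' τs + betaMix P (n0 + n1) Z Z' (τ - L))
          + (betaMix P (n0 + n1) Z Z' τs + betaMix P (n0 + n1) Z Z' (τ - L)) := by
      refine SBaux.combine (SBaux.prob_map inferInstance hD0m)
        (SBaux.prob_map inferInstance hD1m) ?_ chA chB
      refine SBaux.prob_map (SBaux.prob_prod
        (SBaux.prob_map (SBaux.prob_map inferInstance hZ) ?_)
        (SBaux.prob_prod (SBaux.prob_map inferInstance ?_)
          (SBaux.prob_map inferInstance ?_))) ?_
      · exact measurable_pi_lambda _ fun _ => measurable_pi_apply _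
      · exact measurable_pi_lambda _ fun _ => (measurable_pi_apply _).comp hZ
      · exact measurable_pi_lambda _ fun _ => (measurable_pi_apply _).comp hZ
      · exact SBaux.measurable_phi2 _ _ _ _ _ hA
    calc switchCoef P W k τ
        = SBaux.dTVm (P.map (fun ω => delta0 m k τ (W ω)))
            (P.map (fun ω => delta1 m k τ (W ω))) := SBaux.dTV_eq_dTVm P hD0m hD1m
      _ ≤ (betaMix P (n0 + n1) Z Z' τs + betaMix P (n0 + n1) Z Z' (τ - L))
          + (betaMix P (n0 + n1) Z Z' τs + betaMix P (n0 + n1) Z Z' (τ - L)) := hfinal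
      _ = 2 * betaMix P (n0 + n1) Z Z' τs + 2 * betaMix P (n0 + n1) Z Z' (τ - L) := by ring
  -- Case b : m ≤ k + τ
  have bound_b : τ < m → ¬ (k + τ < m) →
      switchCoef P W k τ ≤ 2 * betaMix P (n0 + n1) Z Z' τs := by
    intro hpτ hab
    have hmeq : m + L + τs = n1 + 1 := by omega
    have hττs : τ + τs ≤ n1 := by omega
    have hD0eq : (fun ω => delta0 m k τ (W ω)) = fun ω =>
        SBaux.phi2 n0 L (m - τ) 0 (m - τ) A
          ((fun t : Fin n0 => Z ω ⟨t.val, by have := t.isLt; omega⟩),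
           ((fun j : Fin (0 + L) =>
              Z ω ⟨n0 + τ + τs + j.val, by have := j.isLt; omega⟩),
            (fun j : Fin (m - τ + L) =>
              Z ω ⟨n0 + τ + τs + j.val, by have := j.isLt; omega⟩))) := by
      funext ω i
      simp only [hWdef, delta0, SBaux.phi2, Fin.val_mk]
      rw [if_neg (show ¬ (i.val < m - τ - k) by omega),
        dif_neg (show ¬ (i.val < 0) by omega),
        dif_pos (show i.val - 0 < m - τ by have := i.isLt; omega)]
      refine congrArg (A _) ?_
      funext l
      exact SBaux.fin_app_congr (Z ω) _ _ (by omega)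
    have hD1eq : (fun ω => delta1 m k τ (W ω)) = fun ω =>
        SBaux.phi2 n0 L (m - τ) 0 (m - τ) A
          ((fun t : Fin n0 => Z ω ⟨t.val, by have := t.isLt; omega⟩),
           ((fun j : Fin (0 + L) =>
              Z ω ⟨n0 + (k + τ - m) + τs + j.val, by have := j.isLt; omega⟩),
            (fun j : Fin (m - τ + L) =>
              Z ω ⟨n0 + (k + τ - m) + τs + j.val, by have := j.isLt; omega⟩))) := by
      funext ω i
      simp only [hWdef, delta1, SBaux.phi2, Fin.val_mk]
      rw [dif_neg hab,
        dif_neg (show ¬ (i.val < 0) by omega),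
        dif_pos (show i.val - 0 < m - τ by have := i.isLt; omega)]
      have hmod : (i.val + k + τ - m) % m = i.val + k + τ - m :=
        Nat.mod_eq_of_lt (by have := i.isLt; omega)
      refine congrArg (A _) ?_
      funext l
      exact SBaux.fin_app_congr (Z ω) _ _ (by omega)
    have ch0A := SBaux.conformal_chain0 P hn0 Z Z' hZ hZ' hst hcopy hindep hA
      τs (m - τ) (n0 + τ) (by omega) (by omega) (by omega)
      (fun ω => delta0 m k τ (W ω)) hD0eq
    have ch0B := SBaux.conformal_chain0 P hn0 Z Z' hZ hZ' hst hcopy hindep hA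
      τs (m - τ) (n0 + (k + τ - m)) (by omega) (by omega) (by omega)
      (fun ω => delta1 m k τ (W ω)) hD1eq
    have hfinal : SBaux.dTVm (P.map (fun ω => delta0 m k τ (W ω)))
        (P.map (fun ω => delta1 m k τ (W ω)))
        ≤ betaMix P (n0 + n1) Z Z' τs + betaMix P (n0 + n1) Z Z' τs := by
      refine SBaux.combine (SBaux.prob_map inferInstance hD0m)
        (SBaux.prob_map inferInstance hD1m) ?_ ch0A ch0B
      refine SBaux.prob_map (SBaux.prob_prod
        (SBaux.prob_map (SBaux.prob_map inferInstance hZ) ?_)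
        (SBaux.prob_map (SBaux.prob_map inferInstance ?_) ?_)) ?_
      · exact measurable_pi_lambda _ fun _ => measurable_pi_apply _
      · exact measurable_pi_lambda _ fun _ => (measurable_pi_apply _).comp hZ
      · exact (measurable_pi_lambda _ (fun _ => measurable_pi_apply _)).prodMk measurable_id
      · exact SBaux.measurable_phi2 _ _ _ _ _ hA
    calc switchCoef P W k τ
        = SBaux.dTVm (P.map (fun ω => delta0 m k τ (W ω)))
            (P.map (fun ω => delta1 m k τ (W ω))) := SBaux.dTV_eq_dTVm P hD0m hD1m
      _ ≤ betaMix P (n0 + n1) Z Z' τs + betaMix P (n0 + n1) Z Z' τs := hfinal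
      _ = 2 * betaMix P (n0 + n1) Z Z' τs := by ring
  refine ⟨fun hc1 => ?_, fun hc2 => ?_⟩
  · show switchCoef P W k τ ≤ 2 * betaMix P (n0 + n1) Z Z' τs
      + 2 * betaMix P (n0 + n1) Z Z' (τ - L)
    by_cases hpτ : m ≤ τ
    · rw [bound_deg hpτ]; linarith
    · by_cases hab : k + τ < m
      · exact bound_a (by omega) hab
      · exact le_trans (bound_b (by omega) hab) (by linarith)
  · show switchCoef P W k τ ≤ 2 * betaMix P (n0 + n1) Z Z' τs
    by_cases hpτ : m ≤ τ
    · rw [bound_deg hpτ]; linarith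
    · exact bound_b (by omega) (by omega)
end

section
/- Mixture β-mixing bound for the lower-bound construction: fix n ≥ 1, K ≥ 1, b ∈ [0,1], and let the law of Z ∈ Z^{n+1} be the mixture (b/4)·P_cyclic + (1−b/4)·Q^{n+1}, where Q is uniform on K distinct points z_0,...,z_{K−1} and P_cyclic draws J_1 uniform on {0,...,K−1}, sets J_{i+1} = (J_i + 1) mod K, and returns (z_{J_1},...,z_{J_{n+1}}). Then Z is stationary, and its β-mixing coefficients satisfy β(τ) ≤ 1 − (1 − b/4)^2 ≤ b/2 for all τ ≥ 0. -/
open MeasureTheory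
open scoped ENNReal

section AuxStmt17

open MeasureTheory
open scoped ENNReal

lemma aux_smul_prod17 {β γ : Type*} [MeasurableSpace β] [MeasurableSpace γ] (c : ℝ≥0∞)
    (μ : Measure β) (ν : Measure γ) [SFinite μ] [SFinite ν] :
    (c • μ).prod ν = c • μ.prod ν := by
  ext s hs
  rw [Measure.smul_apply, Measure.prod_apply hs, Measure.prod_apply hs,
    lintegral_smul_measure, smul_eq_mul]

lemma aux_prod_smul17 {β γ : Type*} [MeasurableSpace β] [MeasurableSpace γ] {c : ℝ≥0∞}
    (hc : c ≠ ⊤) (μ : Measure β) (ν : Measure γ) [SFinite μ] [SFinite ν] :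
    μ.prod (c • ν) = c • μ.prod ν := by
  ext s hs
  rw [Measure.smul_apply, Measure.prod_apply hs, Measure.prod_apply hs, smul_eq_mul,
    ← lintegral_const_mul' _ _ hc]
  simp

lemma map_pi_select17 {α ι ι' : Type*} [MeasurableSpace α] [Fintype ι] [Fintype ι']
    (ν : Measure α) [IsProbabilityMeasure ν] {f : ι → ι'} (hf : Function.Injective f) :
    Measure.map (fun w : ι' → α => fun i => w (f i)) (Measure.pi fun _ : ι' => ν) =
      Measure.pi fun _ : ι => ν := by
  classical
  refine (Measure.pi_eq fun s hs => ?_).symm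
  have hm : Measurable (fun w : ι' → α => fun i => w (f i)) :=
    measurable_pi_lambda _ fun i => measurable_pi_apply _
  rw [Measure.map_apply hm (MeasurableSet.univ_pi hs)]
  set t : ι' → Set α := fun j => if h : ∃ i, f i = j then s h.choose else Set.univ with ht
  have htf : ∀ i, t (f i) = s i := by
    intro i
    have he : ∃ i', f i' = f i := ⟨i, rfl⟩
    have h2 : he.choose = i := hf he.choose_spec
    simp only [ht, dif_pos he, h2]
  have hpre : (fun w : ι' → α => fun i => w (f i)) ⁻¹' Set.pi Set.univ s = Set.pi Set.univ t := by
    ext w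
    simp only [Set.mem_preimage, Set.mem_pi, Set.mem_univ, true_implies]
    constructor
    · intro h j
      by_cases hj : ∃ i, f i = j
      · have hh := h hj.choose
        rw [hj.choose_spec] at hh
        simpa only [ht, dif_pos hj] using hh
      · simp [ht, hj]
    · intro h i
      have := h (f i)
      rwa [htf] at this
  rw [hpre, Measure.pi_pi]
  calc ∏ j, ν (t j) = ∏ j ∈ Finset.univ.image f, ν (t j) :=
        (Finset.prod_subset (Finset.subset_univ _) (fun j _ hj => by
          have : ¬ ∃ i, f i = j := by simpa [Finset.mem_image, eq_comm] using hj
          simp [ht, this])).symm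
    _ = ∏ i, ν (t (f i)) := Finset.prod_image (fun a _ b _ h => hf h)
    _ = ∏ i, ν (s i) := by simp [htf]

lemma toReal_prob_le_one17 {β : Type*} [MeasurableSpace β] (ρ : Measure β)
    [IsProbabilityMeasure ρ] (s : Set β) : (ρ s).toReal ≤ 1 := by
  simpa using ENNReal.toReal_mono ENNReal.one_ne_top prob_le_one

lemma absBound17 (s c p y1 y2 y3 x y : ℝ) (hs0 : 0 ≤ s) (hs1 : s ≤ 1)
    (hc0 : 0 ≤ c) (hc1 : c ≤ 1) (hp0 : 0 ≤ p) (hp1 : p ≤ 1)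
    (h10 : 0 ≤ y1) (h11 : y1 ≤ 1) (h20 : 0 ≤ y2) (h21 : y2 ≤ 1)
    (h30 : 0 ≤ y3) (h31 : y3 ≤ 1)
    (hx : x = s * c + (1 - s) * p)
    (hy : y = (s * s * y1 + s * (1 - s) * y2) + ((1 - s) * s * y3 + (1 - s) * (1 - s) * p)) :
    |x - y| ≤ 1 - (1 - s) ^ 2 := by
  subst hx hy
  rw [abs_le]
  constructor
  · nlinarith [mul_nonneg hs0 hc0, mul_nonneg (mul_nonneg hs0 (by linarith : (0:ℝ) ≤ 1 - s)) hp0,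
      mul_nonneg (mul_nonneg hs0 hs0) (sub_nonneg.mpr h11),
      mul_nonneg (mul_nonneg hs0 (by linarith : (0:ℝ) ≤ 1 - s)) (sub_nonneg.mpr h21),
      mul_nonneg (mul_nonneg (by linarith : (0:ℝ) ≤ 1 - s) hs0) (sub_nonneg.mpr h31)]
  · nlinarith [mul_nonneg hs0 (sub_nonneg.mpr hc1),
      mul_nonneg (mul_nonneg (by linarith : (0:ℝ) ≤ 1 - s) hs0) (sub_nonneg.mpr hp1),
      mul_nonneg (mul_nonneg hs0 hs0) h10,
      mul_nonneg (mul_nonneg hs0 (by linarith : (0:ℝ) ≤ 1 - s)) h20,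
      mul_nonneg (mul_nonneg (by linarith : (0:ℝ) ≤ 1 - s) hs0) h30]

end AuxStmt17

open Fin.NatCast

/-- Mixture β-mixing bound for the lower-bound construction: the mixture of the uniform
cyclic process and the iid uniform process is stationary, with `β(τ) ≤ 1-(1-b/4)² ≤ b/2`. -/
theorem stmt17 {𝒵 : Type*} [MeasurableSpace 𝒵] {n K : ℕ} (hn : 1 ≤ n) (hK : 1 ≤ K)
    (z : Fin K → 𝒵) (hz : Function.Injective z) (b : ℝ) (hb0 : 0 ≤ b) (hb1 : b ≤ 1) :
    let Punif : Measure (Fin K) := (K : ℝ≥0∞)⁻¹ • Measure.count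
    let Pcyc : Measure (Fin (n + 1) → 𝒵) :=
      Measure.map (fun j0 : Fin K => fun i : Fin (n + 1) =>
        z ⟨(j0.val + i.val) % K, Nat.mod_lt _ hK⟩) Punif
    let Q : Measure 𝒵 := Measure.map z Punif
    let μ : Measure (Fin (n + 1) → 𝒵) :=
      ENNReal.ofReal (b / 4) • Pcyc
        + ENNReal.ofReal (1 - b / 4) • Measure.pi (fun _ : Fin (n + 1) => Q)
    Stationary μ (id : (Fin (n + 1) → 𝒵) → Fin (n + 1) → 𝒵) ∧
      ∀ τ : ℕ, betaMix (μ.prod μ) n Prod.fst Prod.snd τ ≤ 1 - (1 - b / 4) ^ 2 ∧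
        1 - (1 - b / 4) ^ 2 ≤ b / 2 := by
  intro Punif Pcyc Q μ
  haveI : NeZero K := ⟨by omega⟩
  have hK0 : 0 < K := by omega
  have hzm : Measurable z := Measurable.of_discrete
  haveI hPunifP : IsProbabilityMeasure Punif := by
    constructor
    show ((K : ℝ≥0∞)⁻¹ • Measure.count) Set.univ = 1
    rw [Measure.smul_apply, Measure.count_univ, smul_eq_mul]
    simp only [ENat.card_eq_coe_fintype_card, Fintype.card_fin, ENat.toENNReal_coe]
    exact ENNReal.inv_mul_cancel (Nat.cast_ne_zero.mpr (by omega)) (ENNReal.natCast_ne_top K)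
  haveI : IsProbabilityMeasure Pcyc :=
    Measure.isProbabilityMeasure_map (Measurable.of_discrete).aemeasurable
  haveI : IsProbabilityMeasure Q := Measure.isProbabilityMeasure_map hzm.aemeasurable
  set a : ℝ≥0∞ := ENNReal.ofReal (b / 4) with ha
  set q : ℝ≥0∞ := ENNReal.ofReal (1 - b / 4) with hqd
  have hμ : μ = a • Pcyc + q • Measure.pi (fun _ : Fin (n + 1) => Q) := rfl
  have ha_top : a ≠ ⊤ := ENNReal.ofReal_ne_top
  have hq_top : q ≠ ⊤ := ENNReal.ofReal_ne_top
  have haq : a + q = 1 := by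
    rw [ha, hqd, ← ENNReal.ofReal_add (by linarith) (by linarith)]
    norm_num
  haveI : IsProbabilityMeasure μ := by
    constructor
    rw [hμ, Measure.add_apply, Measure.smul_apply, Measure.smul_apply, measure_univ,
      measure_univ, smul_eq_mul, smul_eq_mul, mul_one, mul_one]
    exact haq
  have hmapcount : ∀ φ : Fin K ≃ Fin K, Measure.map (⇑φ) Measure.count = Measure.count := by
    intro φ
    ext s hs
    rw [Measure.map_apply Measurable.of_discrete hs, Measure.count_apply hs,
      Measure.count_apply (hs.preimage Measurable.of_discrete)]
    rw [show ⇑φ ⁻¹' s = φ.symm '' s by ext x; simp [Set.mem_image_equiv],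
      φ.symm.injective.encard_image s]
  have hshift : ∀ c : ℕ, Measure.map (fun j0 : Fin K => j0 + (c : Fin K)) Punif = Punif := by
    intro c
    show Measure.map (fun j0 : Fin K => j0 + (c : Fin K)) ((K : ℝ≥0∞)⁻¹ • Measure.count)
      = Punif
    rw [Measure.map_smul,
      show (fun j0 : Fin K => j0 + (c : Fin K)) = ⇑(Equiv.addRight (c : Fin K)) from rfl,
      hmapcount]
  have modlem : ∀ x c y : ℕ, ((x + c % K) % K + y) % K = (x + (c + y)) % K := by
    intro x c y
    rw [Nat.mod_add_mod, Nat.add_right_comm, Nat.add_mod_mod]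
    congr 1
    omega
  constructor
  · -- Stationarity
    intro ℓ i h
    have claim : ∀ (c : ℕ) (σ : Fin ℓ → Fin (n + 1)), (∀ j, (σ j).val = c + j.val) →
        Measure.map (fun (w : Fin (n + 1) → 𝒵) (j : Fin ℓ) => w (σ j)) μ =
          a • Measure.map (fun (j0 : Fin K) (j : Fin ℓ) =>
              z ⟨(j0.val + j.val) % K, Nat.mod_lt _ hK0⟩) Punif
            + q • Measure.pi (fun _ : Fin ℓ => Q) := by
      intro c σ hσ
      have hσinj : Function.Injective σ := by
        intro x y hxy
        have hv := congrArg Fin.val hxy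
        rw [hσ x, hσ y] at hv
        exact Fin.ext (by omega)
      have hWm : Measurable (fun (w : Fin (n + 1) → 𝒵) (j : Fin ℓ) => w (σ j)) :=
        measurable_pi_lambda _ fun j => measurable_pi_apply _
      rw [hμ, Measure.map_add _ _ hWm, Measure.map_smul, Measure.map_smul]
      congr 1
      · congr 1
        have hPcyc : Pcyc = Measure.map (fun (j0 : Fin K) (i2 : Fin (n + 1)) =>
            z ⟨(j0.val + i2.val) % K, Nat.mod_lt _ hK0⟩) Punif := rfl
        have hfun : ((fun (w : Fin (n + 1) → 𝒵) (j : Fin ℓ) => w (σ j)) ∘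
              (fun (j0 : Fin K) (i2 : Fin (n + 1)) => z ⟨(j0.val + i2.val) % K, Nat.mod_lt _ hK0⟩))
            = ((fun (j0 : Fin K) (j : Fin ℓ) => z ⟨(j0.val + j.val) % K, Nat.mod_lt _ hK0⟩) ∘
              (fun j0 : Fin K => j0 + (c : Fin K))) := by
          funext j0
          funext j
          show z ⟨(j0.val + (σ j).val) % K, Nat.mod_lt _ hK0⟩
            = z ⟨((j0 + (c : Fin K)).val + j.val) % K, Nat.mod_lt _ hK0⟩
          congr 1
          simp only [Fin.mk.injEq, hσ j, Fin.val_add, Fin.val_natCast]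
          exact (modlem j0.val c j.val).symm
        rw [hPcyc, Measure.map_map hWm Measurable.of_discrete, hfun,
          ← Measure.map_map Measurable.of_discrete Measurable.of_discrete, hshift c]
      · congr 1
        exact map_pi_select17 Q hσinj
    exact (claim i (fun j => ⟨i + j.val, by have := j.isLt; omega⟩) (fun j => rfl)).trans
      (claim 0 (fun j => ⟨j.val, by have := j.isLt; omega⟩)
        (fun j => (Nat.zero_add _).symm)).symm
  · -- beta mixing bound
    intro τ
    have hbsq : 1 - (1 - b / 4) ^ 2 ≤ b / 2 := by nlinarith
    have h0 : (0 : ℝ) ≤ 1 - (1 - b / 4) ^ 2 := by nlinarith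
    refine ⟨?_, hbsq⟩
    refine Real.iSup_le (fun k => ?_) h0
    refine Real.iSup_le (fun Epair => ?_) h0
    obtain ⟨E, hE⟩ := Epair
    set g : (Fin (n + 1) → 𝒵) → Fin (n + 1 - τ) → 𝒵 := fun w i =>
      if i.val < k.val + 1 then w ⟨i.val, by have := i.isLt; omega⟩
      else w ⟨i.val + τ, by have := i.isLt; omega⟩ with hgdef
    set ι0 : Fin (n + 1 - τ) → Fin (n + 1) := fun i =>
      if i.val < k.val + 1 then ⟨i.val, by have := i.isLt; omega⟩
      else ⟨i.val + τ, by have := i.isLt; omega⟩ with hι0def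
    have hgι : g = fun w i => w (ι0 i) := by
      rw [hgdef, hι0def]
      funext w i
      dsimp only
      split_ifs with hc <;> rfl
    have hι0inj : Function.Injective ι0 := by
      intro x y hxy
      rw [hι0def] at hxy
      dsimp only at hxy
      have hx := x.isLt
      have hy := y.isLt
      refine Fin.ext ?_
      split_ifs at hxy <;> simp only [Fin.mk.injEq] at hxy <;> omega
    have hselm : Measurable (fun (w : Fin (n + 1) → 𝒵) (i : Fin (n + 1 - τ)) => w (ι0 i)) :=
      measurable_pi_lambda _ fun i => measurable_pi_apply _
    have hgm : Measurable g := by rw [hgι]; exact hselm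
    set V : (Fin (n + 1) → 𝒵) × (Fin (n + 1) → 𝒵) → Fin (n + 1 - τ) → 𝒵 := fun ω i =>
      if i.val < k.val + 1 then ω.1 ⟨i.val, by have := i.isLt; omega⟩
      else ω.2 ⟨i.val + τ, by have := i.isLt; omega⟩ with hVdef
    have hVm : Measurable V := by
      rw [hVdef]
      refine measurable_pi_lambda _ fun i => ?_
      by_cases hc : i.val < k.val + 1
      · simp only [hc, if_true]
        exact (measurable_pi_apply _).comp measurable_fst
      · simp only [hc, if_false]
        exact (measurable_pi_apply _).comp measurable_snd
    set ιV : Fin (n + 1 - τ) → (Fin (n + 1) ⊕ Fin (n + 1)) := fun i =>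
      if i.val < k.val + 1 then Sum.inl ⟨i.val, by have := i.isLt; omega⟩
      else Sum.inr ⟨i.val + τ, by have := i.isLt; omega⟩ with hιVdef
    have hιVinj : Function.Injective ιV := by
      intro x y hxy
      rw [hιVdef] at hxy
      dsimp only at hxy
      have hx := x.isLt
      have hy := y.isLt
      refine Fin.ext ?_
      split_ifs at hxy <;> simp at hxy <;> omega
    have hselVm : Measurable
        (fun (u : (Fin (n + 1) ⊕ Fin (n + 1)) → 𝒵) (i : Fin (n + 1 - τ)) => u (ιV i)) :=
      measurable_pi_lambda _ fun i => measurable_pi_apply _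
    have hsel0 : Measure.map (fun (w : Fin (n + 1) → 𝒵) (i : Fin (n + 1 - τ)) => w (ι0 i))
        (Measure.pi fun _ : Fin (n + 1) => Q) = Measure.pi fun _ : Fin (n + 1 - τ) => Q :=
      map_pi_select17 Q hι0inj
    have hselV0 : Measure.map
        (fun (u : (Fin (n + 1) ⊕ Fin (n + 1)) → 𝒵) (i : Fin (n + 1 - τ)) => u (ιV i))
        (Measure.pi fun _ : Fin (n + 1) ⊕ Fin (n + 1) => Q)
        = Measure.pi fun _ : Fin (n + 1 - τ) => Q :=
      map_pi_select17 Q hιVinj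
    have hPIg : (Measure.pi fun _ : Fin (n + 1) => Q) (g ⁻¹' E)
        = (Measure.pi fun _ : Fin (n + 1 - τ) => Q) E := by
      calc (Measure.pi fun _ : Fin (n + 1) => Q) (g ⁻¹' E)
          = (Measure.pi fun _ : Fin (n + 1) => Q)
              ((fun (w : Fin (n + 1) → 𝒵) (i : Fin (n + 1 - τ)) => w (ι0 i)) ⁻¹' E) := by
            rw [hgι]
        _ = (Measure.map (fun (w : Fin (n + 1) → 𝒵) (i : Fin (n + 1 - τ)) => w (ι0 i))
              (Measure.pi fun _ : Fin (n + 1) => Q)) E := (Measure.map_apply hselm hE).symm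
        _ = (Measure.pi fun _ : Fin (n + 1 - τ) => Q) E := by rw [hsel0]
    have hU : (μ.prod μ) ((fun ω : (Fin (n + 1) → 𝒵) × (Fin (n + 1) → 𝒵) => g ω.1) ⁻¹' E)
        = a * Pcyc (g ⁻¹' E) + q * (Measure.pi fun _ : Fin (n + 1 - τ) => Q) E := by
      have hset : (fun ω : (Fin (n + 1) → 𝒵) × (Fin (n + 1) → 𝒵) => g ω.1) ⁻¹' E
          = (g ⁻¹' E) ×ˢ Set.univ := by
        ext ω
        simp [Set.mem_prod]
      rw [hset, Measure.prod_prod, measure_univ, mul_one, hμ, Measure.add_apply,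
        Measure.smul_apply, Measure.smul_apply, smul_eq_mul, smul_eq_mul, hPIg]
    have hIIV : ((Measure.pi fun _ : Fin (n + 1) => Q).prod
          (Measure.pi fun _ : Fin (n + 1) => Q)) (V ⁻¹' E)
        = (Measure.pi fun _ : Fin (n + 1 - τ) => Q) E := by
      set e := MeasurableEquiv.sumPiEquivProdPi (fun _ : Fin (n + 1) ⊕ Fin (n + 1) => 𝒵)
        with hedef
      have hmp := measurePreserving_sumPiEquivProdPi_symm
        (X := fun _ : Fin (n + 1) ⊕ Fin (n + 1) => 𝒵) (fun _ => Q)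
      have h2 : Measure.map (⇑e.symm) ((Measure.pi fun _ : Fin (n + 1) => Q).prod
            (Measure.pi fun _ : Fin (n + 1) => Q))
          = Measure.pi (fun _ : Fin (n + 1) ⊕ Fin (n + 1) => Q) := hmp.map_eq
      have hVe : V ⁻¹' E = ⇑e.symm ⁻¹'
          ((fun (u : (Fin (n + 1) ⊕ Fin (n + 1)) → 𝒵) (i : Fin (n + 1 - τ)) => u (ιV i))
            ⁻¹' E) := by
        ext x
        simp only [Set.mem_preimage]
        have hfx : (fun i : Fin (n + 1 - τ) => (e.symm x) (ιV i)) = V x := by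
          funext i
          rw [hVdef, hιVdef]
          dsimp only
          split_ifs with hc <;> rfl
        rw [hfx]
      rw [hVe, ← Measure.map_apply e.symm.measurable (hE.preimage hselVm), h2,
        ← Measure.map_apply hselVm hE, hselV0]
    have hdec : μ.prod μ = ((a * a) • Pcyc.prod Pcyc
          + (a * q) • Pcyc.prod (Measure.pi fun _ : Fin (n + 1) => Q))
        + ((q * a) • (Measure.pi fun _ : Fin (n + 1) => Q).prod Pcyc
          + (q * q) • (Measure.pi fun _ : Fin (n + 1) => Q).prod
              (Measure.pi fun _ : Fin (n + 1) => Q)) := by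
      rw [hμ, Measure.add_prod, aux_smul_prod17, aux_smul_prod17, Measure.prod_add,
        Measure.prod_add, aux_prod_smul17 ha_top, aux_prod_smul17 hq_top,
        aux_prod_smul17 ha_top, aux_prod_smul17 hq_top, smul_add, smul_add,
        smul_smul, smul_smul, smul_smul, smul_smul]
    have hV4 : (μ.prod μ) (V ⁻¹' E)
        = ((a * a) * (Pcyc.prod Pcyc) (V ⁻¹' E)
            + (a * q) * (Pcyc.prod (Measure.pi fun _ : Fin (n + 1) => Q)) (V ⁻¹' E))
          + ((q * a) * ((Measure.pi fun _ : Fin (n + 1) => Q).prod Pcyc) (V ⁻¹' E)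
            + (q * q) * (Measure.pi fun _ : Fin (n + 1 - τ) => Q) E) := by
      rw [hdec]
      simp only [Measure.add_apply, Measure.smul_apply, smul_eq_mul, hIIV]
    -- pass to real numbers
    have harv : a.toReal = b / 4 := by rw [ha, ENNReal.toReal_ofReal (by linarith)]
    have hqrv : q.toReal = 1 - b / 4 := by rw [hqd, ENNReal.toReal_ofReal (by linarith)]
    have hne1 : a * Pcyc (g ⁻¹' E) ≠ ⊤ := ENNReal.mul_ne_top ha_top (measure_ne_top _ _)
    have hne2 : q * (Measure.pi fun _ : Fin (n + 1 - τ) => Q) E ≠ ⊤ :=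
      ENNReal.mul_ne_top hq_top (measure_ne_top _ _)
    have hxv : ((μ.prod μ) ((fun ω : (Fin (n + 1) → 𝒵) × (Fin (n + 1) → 𝒵) => g ω.1)
          ⁻¹' E)).toReal
        = (b / 4) * (Pcyc (g ⁻¹' E)).toReal
          + (1 - b / 4) * ((Measure.pi fun _ : Fin (n + 1 - τ) => Q) E).toReal := by
      rw [hU, ENNReal.toReal_add hne1 hne2, ENNReal.toReal_mul, ENNReal.toReal_mul, harv, hqrv]
    have hne3 : (a * a) * (Pcyc.prod Pcyc) (V ⁻¹' E) ≠ ⊤ :=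
      ENNReal.mul_ne_top (ENNReal.mul_ne_top ha_top ha_top) (measure_ne_top _ _)
    have hne4 : (a * q) * (Pcyc.prod (Measure.pi fun _ : Fin (n + 1) => Q)) (V ⁻¹' E) ≠ ⊤ :=
      ENNReal.mul_ne_top (ENNReal.mul_ne_top ha_top hq_top) (measure_ne_top _ _)
    have hne5 : (q * a) * ((Measure.pi fun _ : Fin (n + 1) => Q).prod Pcyc) (V ⁻¹' E) ≠ ⊤ :=
      ENNReal.mul_ne_top (ENNReal.mul_ne_top hq_top ha_top) (measure_ne_top _ _)
    have hne6 : (q * q) * (Measure.pi fun _ : Fin (n + 1 - τ) => Q) E ≠ ⊤ :=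
      ENNReal.mul_ne_top (ENNReal.mul_ne_top hq_top hq_top) (measure_ne_top _ _)
    have hyv : ((μ.prod μ) (V ⁻¹' E)).toReal
        = ((b / 4) * (b / 4) * ((Pcyc.prod Pcyc) (V ⁻¹' E)).toReal
            + (b / 4) * (1 - b / 4)
              * ((Pcyc.prod (Measure.pi fun _ : Fin (n + 1) => Q)) (V ⁻¹' E)).toReal)
          + ((1 - b / 4) * (b / 4)
              * (((Measure.pi fun _ : Fin (n + 1) => Q).prod Pcyc) (V ⁻¹' E)).toReal
            + (1 - b / 4) * (1 - b / 4)
              * ((Measure.pi fun _ : Fin (n + 1 - τ) => Q) E).toReal) := by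
      rw [hV4, ENNReal.toReal_add (ENNReal.add_ne_top.mpr ⟨hne3, hne4⟩)
          (ENNReal.add_ne_top.mpr ⟨hne5, hne6⟩),
        ENNReal.toReal_add hne3 hne4, ENNReal.toReal_add hne5 hne6,
        ENNReal.toReal_mul, ENNReal.toReal_mul, ENNReal.toReal_mul, ENNReal.toReal_mul,
        ENNReal.toReal_mul, ENNReal.toReal_mul, ENNReal.toReal_mul, ENNReal.toReal_mul,
        harv, hqrv]
    have hb1c : (Pcyc (g ⁻¹' E)).toReal ≤ 1 := toReal_prob_le_one17 _ _
    have hb1p : ((Measure.pi fun _ : Fin (n + 1 - τ) => Q) E).toReal ≤ 1 :=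
      toReal_prob_le_one17 _ _
    have hb3 : ((Pcyc.prod Pcyc) (V ⁻¹' E)).toReal ≤ 1 := toReal_prob_le_one17 _ _
    have hb4 : ((Pcyc.prod (Measure.pi fun _ : Fin (n + 1) => Q)) (V ⁻¹' E)).toReal ≤ 1 :=
      toReal_prob_le_one17 _ _
    have hb5 : (((Measure.pi fun _ : Fin (n + 1) => Q).prod Pcyc) (V ⁻¹' E)).toReal ≤ 1 :=
      toReal_prob_le_one17 _ _
    have hp0 : 0 ≤ ((Measure.pi fun _ : Fin (n + 1 - τ) => Q) E).toReal :=
      ENNReal.toReal_nonneg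
    have hc0 : 0 ≤ (Pcyc (g ⁻¹' E)).toReal := ENNReal.toReal_nonneg
    have hy30 : 0 ≤ ((Pcyc.prod Pcyc) (V ⁻¹' E)).toReal := ENNReal.toReal_nonneg
    have hy40 : 0 ≤ ((Pcyc.prod (Measure.pi fun _ : Fin (n + 1) => Q)) (V ⁻¹' E)).toReal :=
      ENNReal.toReal_nonneg
    have hy50 : 0 ≤ (((Measure.pi fun _ : Fin (n + 1) => Q).prod Pcyc) (V ⁻¹' E)).toReal :=
      ENNReal.toReal_nonneg
    exact absBound17 (b / 4) _ _ _ _ _ _ _ (by linarith) (by linarith)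
      hc0 hb1c hp0 hb1p hy30 hb3 hy40 hb4 hy50 hb5 hxv hyv
end
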